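/- arXiv:1010.1950 — 3 statements merged into one kernel-verified Lean document; each statement's English description precedes it below -/
import Mathlib

section
/- Let P ⊂ [0,1)² have N points, let j ∈ ℕ₀² and m ∈ D_j be such that no point of P lies in the interior of the dyadic rectangle I_{j,m}. Then the Haar coefficient of the discrepancy function satisfies μ_{j,m}(D_P) = −N·2^{-2j₁-2j₂-4}. -/
open MeasureTheory

/-- The L∞-normalized Haar function `h_{j,m}` on `[0,1)`. -/
noncomputable def haar1 (j m : ℕ) (x : ℝ) : ℝ :=
  if (m : ℝ) / 2 ^ j ≤ x ∧ x < ((m : ℝ) + 1 / 2) / 2 ^ j then 1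
  else if ((m : ℝ) + 1 / 2) / 2 ^ j ≤ x ∧ x < ((m : ℝ) + 1) / 2 ^ j then -1
  else 0

/-- The discrepancy function of an `N`-point set `P ⊂ [0,1)²`. -/
noncomputable def discrepancy2 (N : ℕ) (P : Finset (ℝ × ℝ)) (x : ℝ × ℝ) : ℝ :=
  (∑ z ∈ P, (Set.Ioo z.1 1 ×ˢ Set.Ioo z.2 1).indicator (fun _ => (1 : ℝ)) x) -
    N * (x.1 * x.2)

section Aux

lemma haar1_eq (j m : ℕ) : haar1 j m = fun x =>
    (Set.Ico ((m : ℝ) / 2 ^ j) (((m : ℝ) + 1 / 2) / 2 ^ j)).indicator (fun _ => (1:ℝ)) x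
      - (Set.Ico (((m : ℝ) + 1 / 2) / 2 ^ j) (((m : ℝ) + 1) / 2 ^ j)).indicator
          (fun _ => (1:ℝ)) x := by
  funext x
  simp only [haar1, Set.indicator_apply, Set.mem_Ico]
  split_ifs with h1 h2 <;> first | linarith [h1.2, h2.1] | norm_num

lemma haar1_measurable (j m : ℕ) : Measurable (haar1 j m) := by
  rw [haar1_eq]
  exact (measurable_const.indicator measurableSet_Ico).sub
    (measurable_const.indicator measurableSet_Ico)

lemma haar1_abs_le (j m : ℕ) (x : ℝ) : ‖haar1 j m x‖ ≤ 1 := by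
  unfold haar1
  split_ifs <;> simp

lemma dyadic_r_le_one (j m : ℕ) (hm : m < 2 ^ j) : ((m : ℝ) + 1) / 2 ^ j ≤ 1 := by
  have ht : (0:ℝ) < 2 ^ j := by positivity
  rw [div_le_one ht]
  have : (m + 1 : ℕ) ≤ 2 ^ j := hm
  calc (m : ℝ) + 1 = ((m + 1 : ℕ) : ℝ) := by push_cast; ring
    _ ≤ ((2 ^ j : ℕ) : ℝ) := by exact_mod_cast this
    _ = (2:ℝ) ^ j := by push_cast; ring

lemma dyadic_l_le_c (j m : ℕ) : (m : ℝ) / 2 ^ j ≤ ((m : ℝ) + 1 / 2) / 2 ^ j := by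
  have ht : (0:ℝ) < 2 ^ j := by positivity
  gcongr
  linarith

lemma dyadic_c_le_r (j m : ℕ) : ((m : ℝ) + 1 / 2) / 2 ^ j ≤ ((m : ℝ) + 1) / 2 ^ j := by
  have ht : (0:ℝ) < 2 ^ j := by positivity
  gcongr
  linarith

lemma dyadic_l_nonneg (j m : ℕ) : (0:ℝ) ≤ (m : ℝ) / 2 ^ j := by positivity

/-- integral of a constant indicator over `[0,1)`. -/
lemma int_ind_const (u v : ℝ) (hu : 0 ≤ u) (hv : v ≤ 1) (huv : u ≤ v) :
    ∫ x in Set.Ico (0:ℝ) 1, (Set.Ico u v).indicator (fun _ => (1:ℝ)) x = v - u := by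
  rw [setIntegral_indicator measurableSet_Ico,
    Set.inter_eq_self_of_subset_right (Set.Ico_subset_Ico hu hv),
    setIntegral_const]
  rw [Real.volume_real_Ico_of_le huv]
  simp

/-- integral of the identity restricted to `[u,v) ⊆ [0,1)`. -/
lemma int_ind_id (u v : ℝ) (hu : 0 ≤ u) (hv : v ≤ 1) (huv : u ≤ v) :
    ∫ x in Set.Ico (0:ℝ) 1, (Set.Ico u v).indicator (fun y => y) x = (v ^ 2 - u ^ 2) / 2 := by
  rw [setIntegral_indicator measurableSet_Ico,
    Set.inter_eq_self_of_subset_right (Set.Ico_subset_Ico hu hv),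
    MeasureTheory.integral_Ico_eq_integral_Ioo, ← MeasureTheory.integral_Ioc_eq_integral_Ioo,
    ← intervalIntegral.integral_of_le huv, integral_id]

lemma integrable_ind_haar (j m : ℕ) (s : Set ℝ) (hs : MeasurableSet s) :
    Integrable (fun x => s.indicator (fun _ => (1:ℝ)) x * haar1 j m x)
      (volume.restrict (Set.Ico (0:ℝ) 1)) := by
  have hint : Integrable (haar1 j m) (volume.restrict (Set.Ico (0:ℝ) 1)) := by
    rw [haar1_eq]
    exact ((integrable_const _).indicator measurableSet_Ico).sub
      ((integrable_const _).indicator measurableSet_Ico)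
  refine hint.bdd_mul ((measurable_const.indicator hs).aestronglyMeasurable) (c := 1) (Filter.Eventually.of_forall fun x => ?_)
  by_cases h : x ∈ s <;> simp [h]

lemma integrable_id_haar (j m : ℕ) :
    Integrable (fun x => x * haar1 j m x) (volume.restrict (Set.Ico (0:ℝ) 1)) := by
  have hid : IntegrableOn (fun x : ℝ => x) (Set.Ico (0:ℝ) 1) volume :=
    (continuous_id.integrableOn_Icc (a := (0:ℝ)) (b := 1)).mono_set Set.Ico_subset_Icc_self
  have := hid.bdd_mul (haar1_measurable j m).aestronglyMeasurable (c := 1) (Filter.Eventually.of_forall (haar1_abs_le j m))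
  exact this.congr (Filter.Eventually.of_forall fun x => by ring)

/-- full cancellation of the Haar function. -/
lemma integral_haar (j m : ℕ) (hm : m < 2 ^ j) :
    ∫ x in Set.Ico (0:ℝ) 1, haar1 j m x = 0 := by
  have ht : (0:ℝ) < 2 ^ j := by positivity
  rw [haar1_eq]
  rw [integral_sub (((integrable_const _).indicator measurableSet_Ico))
    (((integrable_const _).indicator measurableSet_Ico))]
  rw [int_ind_const _ _ (dyadic_l_nonneg j m)
      (le_trans (dyadic_c_le_r j m) (dyadic_r_le_one j m hm)) (dyadic_l_le_c j m),
    int_ind_const _ _ (le_trans (dyadic_l_nonneg j m) (dyadic_l_le_c j m))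
      (dyadic_r_le_one j m hm) (dyadic_c_le_r j m)]
  ring

/-- the first moment of the Haar function. -/
lemma integral_id_haar (j m : ℕ) (hm : m < 2 ^ j) :
    ∫ x in Set.Ico (0:ℝ) 1, x * haar1 j m x = -(2:ℝ) ^ (-2 * (j:ℤ) - 2) := by
  have ht : (0:ℝ) < 2 ^ j := by positivity
  have hpt : ∀ x : ℝ, x * haar1 j m x =
      (Set.Ico ((m : ℝ) / 2 ^ j) (((m : ℝ) + 1 / 2) / 2 ^ j)).indicator (fun y => y) x
        - (Set.Ico (((m : ℝ) + 1 / 2) / 2 ^ j) (((m : ℝ) + 1) / 2 ^ j)).indicator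
            (fun y => y) x := by
    intro x
    simp only [haar1, Set.indicator_apply, Set.mem_Ico]
    split_ifs with h1 h2 <;> first | linarith [h1.2, h2.1] | ring
  simp_rw [hpt]
  have hIc : Integrable ((Set.Ico ((m : ℝ) / 2 ^ j)
      (((m : ℝ) + 1 / 2) / 2 ^ j)).indicator (fun y => y))
      (volume.restrict (Set.Ico (0:ℝ) 1)) := by
    have hid : IntegrableOn (fun y : ℝ => y) (Set.Ico (0:ℝ) 1) volume :=
      (continuous_id.integrableOn_Icc (a := (0:ℝ)) (b := 1)).mono_set
        Set.Ico_subset_Icc_self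
    exact hid.indicator measurableSet_Ico
  have hIr : Integrable ((Set.Ico (((m : ℝ) + 1 / 2) / 2 ^ j)
      (((m : ℝ) + 1) / 2 ^ j)).indicator (fun y => y))
      (volume.restrict (Set.Ico (0:ℝ) 1)) := by
    have hid : IntegrableOn (fun y : ℝ => y) (Set.Ico (0:ℝ) 1) volume :=
      (continuous_id.integrableOn_Icc (a := (0:ℝ)) (b := 1)).mono_set
        Set.Ico_subset_Icc_self
    exact hid.indicator measurableSet_Ico
  rw [integral_sub hIc hIr,
    int_ind_id _ _ (dyadic_l_nonneg j m)
      (le_trans (dyadic_c_le_r j m) (dyadic_r_le_one j m hm)) (dyadic_l_le_c j m),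
    int_ind_id _ _ (le_trans (dyadic_l_nonneg j m) (dyadic_l_le_c j m))
      (dyadic_r_le_one j m hm) (dyadic_c_le_r j m)]
  have hz : (2:ℝ) ^ (-2 * (j:ℤ) - 2) = ((2:ℝ) ^ (2 * j + 2))⁻¹ := by
    rw [show -2 * (j:ℤ) - 2 = -((2 * j + 2 : ℕ) : ℤ) by push_cast; ring, zpow_neg,
      zpow_natCast]
  rw [hz]
  have h4 : (2:ℝ) ^ (2 * j + 2) = 4 * (2 ^ j) ^ 2 := by
    rw [pow_add, mul_comm 2 j, pow_mul]; ring
  rw [h4]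
  field_simp
  ring_nf

end Aux

lemma integral_ind_haar_zero (j m : ℕ) (hm : m < 2 ^ j) (a : ℝ) (ha0 : 0 ≤ a)
    (hcase : a ≤ (m:ℝ) / 2 ^ j ∨ ((m:ℝ) + 1) / 2 ^ j ≤ a) :
    ∫ x in Set.Ico (0:ℝ) 1, (Set.Ioo a 1).indicator (fun _ => (1:ℝ)) x * haar1 j m x
      = 0 := by
  have hlc := dyadic_l_le_c j m
  have hcr := dyadic_c_le_r j m
  have hr1 := dyadic_r_le_one j m hm
  rcases hcase with hL | hR
  · -- a ≤ l : the indicator is 1 on the support of haar1 except possibly at a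
    have key : ∀ x : ℝ, x ≠ a →
        (Set.Ioo a 1).indicator (fun _ => (1:ℝ)) x * haar1 j m x = haar1 j m x := by
      intro x hx
      unfold haar1
      split_ifs with h1 h2
      · rw [Set.indicator_of_mem (Set.mem_Ioo.mpr
          ⟨lt_of_le_of_ne (le_trans hL h1.1) (Ne.symm hx), by linarith [h1.2]⟩)]
        ring
      · rw [Set.indicator_of_mem (Set.mem_Ioo.mpr
          ⟨lt_of_le_of_ne (le_trans hL (le_trans hlc h2.1)) (Ne.symm hx),
            by linarith [h2.2]⟩)]
        ring
      · ring
    have hnull : (volume.restrict (Set.Ico (0:ℝ) 1)) {a} = 0 := by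
      rw [Measure.restrict_apply (measurableSet_singleton a)]
      exact measure_mono_null Set.inter_subset_left Real.volume_singleton
    have hsub : {x : ℝ | ¬ ((Set.Ioo a 1).indicator (fun _ => (1:ℝ)) x * haar1 j m x
        = haar1 j m x)} ⊆ {a} := by
      intro x hx
      by_contra hxa
      exact hx (key x (by simpa using hxa))
    have hae : (fun x => (Set.Ioo a 1).indicator (fun _ => (1:ℝ)) x * haar1 j m x)
        =ᵐ[volume.restrict (Set.Ico (0:ℝ) 1)] haar1 j m :=
      ae_iff.mpr (measure_mono_null hsub hnull)
    rw [integral_congr_ae hae]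
    exact integral_haar j m hm
  · -- r ≤ a : the integrand vanishes identically
    have key : ∀ x : ℝ, (Set.Ioo a 1).indicator (fun _ => (1:ℝ)) x * haar1 j m x = 0 := by
      intro x
      unfold haar1
      split_ifs with h1 h2
      · rw [Set.indicator_of_notMem (by
          simp only [Set.mem_Ioo, not_and]
          intro hax hx1
          linarith [h1.2])]
        ring
      · rw [Set.indicator_of_notMem (by
          simp only [Set.mem_Ioo, not_and]
          intro hax hx1
          linarith [h2.2])]
        ring
      · ring
    simp only [key]
    simp

theorem haar_coefficient_discrepancy_empty_box (N : ℕ) (P : Finset (ℝ × ℝ))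
    (hP : ↑P ⊆ Set.Ico (0 : ℝ) 1 ×ˢ Set.Ico (0 : ℝ) 1) (hN : P.card = N)
    (j₁ j₂ m₁ m₂ : ℕ) (hm₁ : m₁ < 2 ^ j₁) (hm₂ : m₂ < 2 ^ j₂)
    (hempty : ∀ z ∈ P,
      z ∉ Set.Ioo ((m₁ : ℝ) / 2 ^ j₁) (((m₁ : ℝ) + 1) / 2 ^ j₁) ×ˢ
          Set.Ioo ((m₂ : ℝ) / 2 ^ j₂) (((m₂ : ℝ) + 1) / 2 ^ j₂)) :
    ∫ x in Set.Ico (0 : ℝ) 1 ×ˢ Set.Ico (0 : ℝ) 1,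
        discrepancy2 N P x * (haar1 j₁ m₁ x.1 * haar1 j₂ m₂ x.2)
      = -(N : ℝ) * (2 : ℝ) ^ (-2 * (j₁ : ℤ) - 2 * (j₂ : ℤ) - 4) := by
  set ν := volume.restrict (Set.Ico (0:ℝ) 1) with hν
  have hmeas : (volume : Measure (ℝ × ℝ)).restrict
      (Set.Ico (0:ℝ) 1 ×ˢ Set.Ico (0:ℝ) 1) = ν.prod ν := by
    rw [Measure.volume_eq_prod, ← Measure.prod_restrict]
  rw [hmeas]
  have hpt : ∀ x : ℝ × ℝ, discrepancy2 N P x * (haar1 j₁ m₁ x.1 * haar1 j₂ m₂ x.2)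
      = (∑ z ∈ P, ((Set.Ioo z.1 1).indicator (fun _ => (1:ℝ)) x.1 * haar1 j₁ m₁ x.1) *
            ((Set.Ioo z.2 1).indicator (fun _ => (1:ℝ)) x.2 * haar1 j₂ m₂ x.2))
        - ((N : ℝ) * (x.1 * haar1 j₁ m₁ x.1)) * (x.2 * haar1 j₂ m₂ x.2) := by
    intro x
    unfold discrepancy2
    rw [sub_mul, Finset.sum_mul]
    congr 1
    · refine Finset.sum_congr rfl fun z _ => ?_
      have hind : (Set.Ioo z.1 1 ×ˢ Set.Ioo z.2 1).indicator (fun _ => (1:ℝ)) x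
          = (Set.Ioo z.1 1).indicator (fun _ => (1:ℝ)) x.1 *
            (Set.Ioo z.2 1).indicator (fun _ => (1:ℝ)) x.2 := by
        by_cases h1 : x.1 ∈ Set.Ioo z.1 1 <;> by_cases h2 : x.2 ∈ Set.Ioo z.2 1 <;>
          simp [Set.indicator_apply, Set.mem_prod, h1, h2]
      rw [hind]; ring
    · ring
  rw [integral_congr_ae (Filter.Eventually.of_forall hpt)]
  have hintf : ∀ z : ℝ × ℝ, Integrable (fun x : ℝ × ℝ =>
      ((Set.Ioo z.1 1).indicator (fun _ => (1:ℝ)) x.1 * haar1 j₁ m₁ x.1) *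
      ((Set.Ioo z.2 1).indicator (fun _ => (1:ℝ)) x.2 * haar1 j₂ m₂ x.2)) (ν.prod ν) :=
    fun z => (integrable_ind_haar j₁ m₁ _ measurableSet_Ioo).mul_prod
      (integrable_ind_haar j₂ m₂ _ measurableSet_Ioo)
  have hint2 : Integrable (fun x : ℝ × ℝ =>
      ((N : ℝ) * (x.1 * haar1 j₁ m₁ x.1)) * (x.2 * haar1 j₂ m₂ x.2)) (ν.prod ν) :=
    ((integrable_id_haar j₁ m₁).const_mul _).mul_prod (integrable_id_haar j₂ m₂)
  rw [integral_sub (integrable_finset_sum _ fun z _ => hintf z) hint2,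
    integral_finset_sum _ fun z _ => hintf z]
  have hzero : ∀ z ∈ P, (∫ x : ℝ × ℝ,
      ((Set.Ioo z.1 1).indicator (fun _ => (1:ℝ)) x.1 * haar1 j₁ m₁ x.1) *
      ((Set.Ioo z.2 1).indicator (fun _ => (1:ℝ)) x.2 * haar1 j₂ m₂ x.2) ∂(ν.prod ν))
      = 0 := by
    intro z hz
    rw [integral_prod_mul (f := fun y => (Set.Ioo z.1 1).indicator (fun _ => (1:ℝ)) y *
        haar1 j₁ m₁ y)
      (g := fun y => (Set.Ioo z.2 1).indicator (fun _ => (1:ℝ)) y * haar1 j₂ m₂ y)]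
    have hz1 := (hP hz).1
    have hz2 := (hP hz).2
    have hcases : z.1 ∉ Set.Ioo ((m₁:ℝ)/2^j₁) (((m₁:ℝ)+1)/2^j₁) ∨
        z.2 ∉ Set.Ioo ((m₂:ℝ)/2^j₂) (((m₂:ℝ)+1)/2^j₂) := by
      by_contra h
      push_neg at h
      exact hempty z hz ⟨h.1, h.2⟩
    rcases hcases with h | h
    · have hc : z.1 ≤ (m₁:ℝ)/2^j₁ ∨ ((m₁:ℝ)+1)/2^j₁ ≤ z.1 := by
        simp only [Set.mem_Ioo, not_and_or, not_lt] at h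
        exact h
      rw [integral_ind_haar_zero j₁ m₁ hm₁ z.1 hz1.1 hc, zero_mul]
    · have hc : z.2 ≤ (m₂:ℝ)/2^j₂ ∨ ((m₂:ℝ)+1)/2^j₂ ≤ z.2 := by
        simp only [Set.mem_Ioo, not_and_or, not_lt] at h
        exact h
      rw [integral_ind_haar_zero j₂ m₂ hm₂ z.2 hz2.1 hc, mul_zero]
  rw [Finset.sum_eq_zero hzero,
    integral_prod_mul (f := fun y => (N : ℝ) * (y * haar1 j₁ m₁ y))
      (g := fun y => y * haar1 j₂ m₂ y), integral_const_mul,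
    integral_id_haar j₁ m₁ hm₁, integral_id_haar j₂ m₂ hm₂]
  rw [show (0:ℝ) - ((N:ℝ) * -(2:ℝ)^(-2*(j₁:ℤ)-2)) * -(2:ℝ)^(-2*(j₂:ℤ)-2)
      = -(N:ℝ) * ((2:ℝ)^(-2*(j₁:ℤ)-2) * (2:ℝ)^(-2*(j₂:ℤ)-2)) from by ring,
    ← zpow_add₀ (two_ne_zero (α := ℝ)),
    show (-2*(j₁:ℤ)-2) + (-2*(j₂:ℤ)-2) = -2*(j₁:ℤ) - 2*(j₂:ℤ) - 4 from by ring]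
end

section
/- For every N ∈ ℕ with N ≥ 2 and every N-point set P ⊂ [0,1)², the L₂-norm of the discrepancy function satisfies ‖D_P‖_{L₂}² ≥ N² · Σ_{j₁+j₂ ≥ M} 2^{j₁+j₂}·(2^{j₁+j₂} − N)·2^{-4j₁-4j₂-8}, where M = ⌈log₂ N⌉ and the sum runs over (j₁,j₂) ∈ ℕ₀² with j₁+j₂ ≥ M. -/
open MeasureTheory Set

namespace RothAux

noncomputable def dd (j : ℕ) : ℝ := ((2:ℝ)^j)⁻¹

lemma dd_pos (j : ℕ) : 0 < dd j := by unfold dd; positivity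

/-- 1D Haar function at scale `j`, position `m`. -/
noncomputable def H (j m : ℕ) : ℝ → ℝ := fun t =>
  (Ico ((m:ℝ) * dd j) ((m:ℝ) * dd j + dd j / 2)).indicator 1 t -
  (Ico ((m:ℝ) * dd j + dd j / 2) ((m:ℝ) * dd j + dd j)).indicator 1 t

lemma measurable_H (j m : ℕ) : Measurable (H j m) := by
  unfold H
  exact ((measurable_const.indicator measurableSet_Ico).sub
    (measurable_const.indicator measurableSet_Ico))

lemma H_support {j m : ℕ} {t : ℝ} (h : H j m t ≠ 0) :
    (m:ℝ) * dd j ≤ t ∧ t < (m:ℝ) * dd j + dd j := by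
  by_contra hc
  apply h
  have h1 : t ∉ Ico ((m:ℝ) * dd j) ((m:ℝ) * dd j + dd j / 2) := by
    intro ht
    exact hc ⟨ht.1, ht.2.trans_le (by linarith [ (dd_pos j).le ])⟩
  have h2 : t ∉ Ico ((m:ℝ) * dd j + dd j / 2) ((m:ℝ) * dd j + dd j) := by
    intro ht
    exact hc ⟨le_trans (by linarith [(dd_pos j).le]) ht.1, ht.2⟩
  simp [H, indicator_of_notMem, h1, h2]

lemma H_left {j m : ℕ} {t : ℝ} (h1 : (m:ℝ) * dd j ≤ t)
    (h2 : t < (m:ℝ) * dd j + dd j / 2) : H j m t = 1 := by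
  have h3 : t ∉ Ico ((m:ℝ) * dd j + dd j / 2) ((m:ℝ) * dd j + dd j) := by
    intro ht; linarith [ht.1]
  simp [H, indicator_of_mem (mem_Ico.2 ⟨h1, h2⟩), indicator_of_notMem h3]

lemma H_right {j m : ℕ} {t : ℝ} (h1 : (m:ℝ) * dd j + dd j / 2 ≤ t)
    (h2 : t < (m:ℝ) * dd j + dd j) : H j m t = -1 := by
  have h3 : t ∉ Ico ((m:ℝ) * dd j) ((m:ℝ) * dd j + dd j / 2) := by
    intro ht; linarith [ht.2]
  simp [H, indicator_of_mem (mem_Ico.2 ⟨h1, h2⟩), indicator_of_notMem h3]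

lemma abs_H_le (j m : ℕ) (t : ℝ) : |H j m t| ≤ 1 := by
  rcases eq_or_ne (H j m t) 0 with h | h
  · simp [h]
  · obtain ⟨h1, h2⟩ := H_support h
    rcases lt_or_ge t ((m:ℝ) * dd j + dd j / 2) with h3 | h3
    · rw [H_left h1 h3]; simp
    · rw [H_right h3 h2]; simp

lemma integrable_indicator_Ico (a b : ℝ) :
    Integrable ((Ico a b).indicator (1 : ℝ → ℝ)) volume := by
  rw [integrable_indicator_iff measurableSet_Ico]
  exact integrableOn_const (by simp [Real.volume_Ico])

lemma integrable_H (j m : ℕ) : Integrable (H j m) volume :=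
  (integrable_indicator_Ico _ _).sub (integrable_indicator_Ico _ _)

lemma integral_indicator_Ico (a b : ℝ) (h : a ≤ b) :
    ∫ t, (Ico a b).indicator (1 : ℝ → ℝ) t = b - a := by
  rw [show (1 : ℝ → ℝ) = fun _ => (1:ℝ) from rfl,
    integral_indicator_const (1:ℝ) measurableSet_Ico]
  simp [Real.volume_Ico, ENNReal.toReal_ofReal (by linarith : (0:ℝ) ≤ b - a), h]

lemma integral_H (j m : ℕ) : ∫ t, H j m t = 0 := by
  unfold H
  rw [integral_sub (integrable_indicator_Ico _ _) (integrable_indicator_Ico _ _),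
    integral_indicator_Ico _ _ (by linarith [(dd_pos j).le]),
    integral_indicator_Ico _ _ (by linarith [(dd_pos j).le])]
  ring

lemma indicator_id_eq (a b : ℝ) : (fun t : ℝ => t * (Ico a b).indicator 1 t)
    = (Ico a b).indicator (fun t : ℝ => t) := by
  funext t
  by_cases ht : t ∈ Ico a b <;> simp [indicator_of_mem, indicator_of_notMem, ht]

lemma integrable_indicator_id (a b : ℝ) :
    Integrable ((Ico a b).indicator (fun t : ℝ => t)) volume := by
  refine Integrable.mono' ((integrable_indicator_Ico a b).const_mul (|a| + |b|))
    (measurable_id.indicator measurableSet_Ico).aestronglyMeasurable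
    (Filter.Eventually.of_forall fun t => ?_)
  by_cases ht : t ∈ Ico a b
  · simp only [indicator_of_mem ht, Real.norm_eq_abs, Pi.one_apply, mul_one]
    exact abs_le.2 ⟨by linarith [neg_abs_le a, ht.1, ht.2, abs_nonneg b],
      by linarith [le_abs_self b, ht.2, abs_nonneg a]⟩
  · simp [indicator_of_notMem, ht]

lemma integral_id_indicator_Ico (a b : ℝ) (h : a ≤ b) :
    ∫ t, t * (Ico a b).indicator (1 : ℝ → ℝ) t = (b^2 - a^2) / 2 := by
  rw [indicator_id_eq, integral_indicator measurableSet_Ico,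
    setIntegral_congr_set Ico_ae_eq_Ioc, ← intervalIntegral.integral_of_le h,
    integral_id]

lemma integral_id_H (j m : ℕ) : ∫ t, t * H j m t = -(dd j * dd j) / 4 := by
  have he : (fun t => t * H j m t) = (fun t =>
      t * (Ico ((m:ℝ) * dd j) ((m:ℝ) * dd j + dd j / 2)).indicator 1 t
      - t * (Ico ((m:ℝ) * dd j + dd j / 2) ((m:ℝ) * dd j + dd j)).indicator 1 t) := by
    funext t; simp [H]; ring
  have hd := (dd_pos j).le
  rw [he, integral_sub (by rw [indicator_id_eq]; exact integrable_indicator_id _ _)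
      (by rw [indicator_id_eq]; exact integrable_indicator_id _ _),
    integral_id_indicator_Ico _ _ (by linarith), integral_id_indicator_Ico _ _ (by linarith)]
  ring

lemma H_sq (j m : ℕ) : (fun t => H j m t * H j m t)
    = (Ico ((m:ℝ) * dd j) ((m:ℝ) * dd j + dd j)).indicator (1 : ℝ → ℝ) := by
  funext t
  rcases eq_or_ne (H j m t) 0 with h | h
  · rw [h, mul_zero]
    by_cases ht : t ∈ Ico ((m:ℝ) * dd j) ((m:ℝ) * dd j + dd j)
    · exfalso
      rcases lt_or_ge t ((m:ℝ) * dd j + dd j / 2) with h3 | h3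
      · rw [H_left ht.1 h3] at h; norm_num at h
      · rw [H_right h3 ht.2] at h; norm_num at h
    · simp [indicator_of_notMem ht]
  · obtain ⟨h1, h2⟩ := H_support h
    rw [indicator_of_mem (mem_Ico.2 ⟨h1, h2⟩)]
    rcases lt_or_ge t ((m:ℝ) * dd j + dd j / 2) with h3 | h3
    · rw [H_left h1 h3]; norm_num
    · rw [H_right h3 h2]; norm_num

lemma integral_H_sq (j m : ℕ) : ∫ t, H j m t * H j m t = dd j := by
  rw [H_sq, integral_indicator_Ico _ _ (by linarith [(dd_pos j).le])]
  ring

/-- dyadic nesting : `I_{j',m'} ⊆ I_{j, m'/2^(j'-j)}` for `j ≤ j'`. -/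
lemma dyadic_nest {j j' m' : ℕ} (h : j ≤ j') {t : ℝ}
    (ht1 : (m':ℝ) * dd j' ≤ t) (ht2 : t < (m':ℝ) * dd j' + dd j') :
    ((m' / 2^(j'-j) : ℕ) : ℝ) * dd j ≤ t ∧
      t < ((m' / 2^(j'-j) : ℕ) : ℝ) * dd j + dd j := by
  set q := m' / 2^(j'-j) with hq
  have hdd : dd j = 2^(j'-j) * dd j' := by
    have hp : (2:ℝ)^(j'-j) * (2:ℝ)^j = (2:ℝ)^j' := by rw [← pow_add]; congr 1; omega
    unfold dd
    rw [← hp, mul_inv, ← mul_assoc, mul_inv_cancel₀ (by positivity), one_mul]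
  have h1 : (q : ℝ) * 2^(j'-j) ≤ (m' : ℝ) := by
    exact_mod_cast Nat.div_mul_le_self m' (2^(j'-j))
  have h2 : (m' : ℝ) + 1 ≤ ((q : ℝ) + 1) * 2^(j'-j) := by
    have h2n : m' + 1 ≤ q * 2^(j'-j) + 2^(j'-j) :=
      Nat.succ_le_of_lt (Nat.lt_div_mul_add (by positivity))
    have h2r : ((m' + 1 : ℕ) : ℝ) ≤ ((q * 2^(j'-j) + 2^(j'-j) : ℕ) : ℝ) := Nat.cast_le.2 h2n
    push_cast at h2r
    linarith
  have hdp := dd_pos j'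
  constructor
  · calc (q:ℝ) * dd j = (q:ℝ) * 2^(j'-j) * dd j' := by rw [hdd]; ring
    _ ≤ (m':ℝ) * dd j' := by nlinarith
    _ ≤ t := ht1
  · calc t < ((m':ℝ) + 1) * dd j' := by linarith
    _ ≤ ((q:ℝ) + 1) * 2^(j'-j) * dd j' := by nlinarith
    _ = (q:ℝ) * dd j + dd j := by rw [hdd]; ring

lemma dyadic_disjoint {j k l : ℕ} (hkl : k ≠ l) {t : ℝ}
    (h1 : (k:ℝ) * dd j ≤ t) (h2 : t < (k:ℝ) * dd j + dd j)
    (h3 : (l:ℝ) * dd j ≤ t) (h4 : t < (l:ℝ) * dd j + dd j) : False := by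
  have hdp := dd_pos j
  rcases lt_or_gt_of_ne hkl with h | h
  · have : (k:ℝ) + 1 ≤ l := by exact_mod_cast Nat.succ_le_of_lt h
    nlinarith
  · have : (l:ℝ) + 1 ≤ k := by exact_mod_cast Nat.succ_le_of_lt h
    nlinarith

/-- Orthogonality of 1D Haar functions, case `j < j'`. -/
lemma integral_H_mul_H_lt {j m j' m' : ℕ} (hjj : j < j') :
    ∫ t, H j m t * H j' m' t = 0 := by
  -- H j m is constant on the support of H j' m'
  obtain ⟨ε, hε⟩ : ∃ ε : ℝ, ∀ t, (m':ℝ) * dd j' ≤ t → t < (m':ℝ) * dd j' + dd j' →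
      H j m t = ε := by
    set k := m' / 2^(j'-(j+1)) with hk
    have hLeq : (m:ℝ) * dd j = ((2*m : ℕ):ℝ) * dd (j+1) ∧
        (m:ℝ) * dd j + dd j / 2 = ((2*m : ℕ):ℝ) * dd (j+1) + dd (j+1) ∧
        (m:ℝ) * dd j + dd j / 2 = ((2*m+1 : ℕ):ℝ) * dd (j+1) ∧
        (m:ℝ) * dd j + dd j = ((2*m+1 : ℕ):ℝ) * dd (j+1) + dd (j+1) := by
      have : dd (j+1) = dd j / 2 := by unfold dd; rw [pow_succ]; field_simp
      refine ⟨?_, ?_, ?_, ?_⟩ <;> push_cast <;> rw [this] <;> ring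
    rcases eq_or_ne k (2*m) with hk2 | hk2
    · refine ⟨1, fun t ht1 ht2 => ?_⟩
      obtain ⟨n1, n2⟩ := dyadic_nest (show j+1 ≤ j' from hjj) ht1 ht2
      rw [← hk, hk2] at n1 n2
      exact H_left (by rw [hLeq.1]; exact n1) (by rw [hLeq.2.1]; exact n2)
    rcases eq_or_ne k (2*m+1) with hk3 | hk3
    · refine ⟨-1, fun t ht1 ht2 => ?_⟩
      obtain ⟨n1, n2⟩ := dyadic_nest (show j+1 ≤ j' from hjj) ht1 ht2
      rw [← hk, hk3] at n1 n2
      exact H_right (by rw [hLeq.2.2.1]; exact n1) (by rw [hLeq.2.2.2]; exact n2)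
    · refine ⟨0, fun t ht1 ht2 => ?_⟩
      obtain ⟨n1, n2⟩ := dyadic_nest (show j+1 ≤ j' from hjj) ht1 ht2
      rw [← hk] at n1 n2
      by_contra h
      obtain ⟨s1, s2⟩ := H_support h
      rcases lt_or_ge t ((m:ℝ) * dd j + dd j / 2) with h3 | h3
      · exact dyadic_disjoint hk2 n1 n2 (by rw [← hLeq.1]; exact s1)
          (by rw [← hLeq.2.1]; exact h3)
      · exact dyadic_disjoint hk3 n1 n2 (by rw [← hLeq.2.2.1]; exact h3)
          (by rw [← hLeq.2.2.2]; exact s2)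
  have : (fun t => H j m t * H j' m' t) = fun t => ε * H j' m' t := by
    funext t
    rcases eq_or_ne (H j' m' t) 0 with h | h
    · rw [h, mul_zero, mul_zero]
    · obtain ⟨h1, h2⟩ := H_support h
      rw [hε t h1 h2]
  rw [this, integral_const_mul, integral_H, mul_zero]

/-- Orthogonality of 1D Haar functions. -/
lemma integral_H_mul_H {j m j' m' : ℕ} (h : (j, m) ≠ (j', m')) :
    ∫ t, H j m t * H j' m' t = 0 := by
  rcases lt_trichotomy j j' with hj | hj | hj
  · exact integral_H_mul_H_lt hj
  · subst hj
    have hm : m ≠ m' := by simpa using h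
    have : (fun t => H j m t * H j m' t) = fun _ => (0:ℝ) := by
      funext t
      rcases eq_or_ne (H j m t) 0 with h1 | h1
      · rw [h1, zero_mul]
      rcases eq_or_ne (H j m' t) 0 with h2 | h2
      · rw [h2, mul_zero]
      obtain ⟨a1, a2⟩ := H_support h1
      obtain ⟨b1, b2⟩ := H_support h2
      exact absurd (dyadic_disjoint hm a1 a2 b1 b2) (by simp)
    rw [this, integral_zero]
  · have : (fun t => H j m t * H j' m' t) = fun t => H j' m' t * H j m t := by
      funext t; ring
    rw [this, integral_H_mul_H_lt hj]

/-- `∫ 1_{(z,1)} H = 0` when `z` is outside the support interval. -/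
lemma integral_ioo_mul_H {j m : ℕ} {z : ℝ} (hm : m < 2^j)
    (hz : z < (m:ℝ) * dd j ∨ (m:ℝ) * dd j + dd j ≤ z) :
    ∫ t, (Ioo z 1).indicator (1 : ℝ → ℝ) t * H j m t = 0 := by
  have hsup : ((m:ℝ) + 1) * dd j ≤ 1 := by
    have h1 : ((m:ℝ) + 1) ≤ (2:ℝ)^j := by exact_mod_cast hm
    have : (0:ℝ) < (2:ℝ)^j := by positivity
    unfold dd
    rw [mul_inv_le_iff₀ this, one_mul]
    exact h1
  rcases hz with hz | hz
  · have : (fun t => (Ioo z 1).indicator (1 : ℝ → ℝ) t * H j m t) = H j m := by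
      funext t
      rcases eq_or_ne (H j m t) 0 with h | h
      · rw [h, mul_zero]
      · obtain ⟨h1, h2⟩ := H_support h
        rw [indicator_of_mem (mem_Ioo.2 ⟨lt_of_lt_of_le hz h1, by nlinarith⟩)]
        simp
    rw [this, integral_H]
  · have : (fun t => (Ioo z 1).indicator (1 : ℝ → ℝ) t * H j m t) = fun _ => (0:ℝ) := by
      funext t
      rcases eq_or_ne (H j m t) 0 with h | h
      · rw [h, mul_zero]
      · obtain ⟨h1, h2⟩ := H_support h
        rw [indicator_of_notMem, zero_mul]
        intro ht
        exact absurd ht.1 (by linarith)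
    rw [this, integral_zero]

lemma bessel {α : Type*} [MeasurableSpace α] (μ : Measure α) (s : Set α)
    (f : α → ℝ) {ι : Type*} [DecidableEq ι] (S : Finset ι) (g : ι → α → ℝ)
    (hf2 : IntegrableOn (fun x => f x ^ 2) s μ)
    (hfg : ∀ i ∈ S, IntegrableOn (fun x => f x * g i x) s μ)
    (hgg : ∀ i ∈ S, ∀ j ∈ S, IntegrableOn (fun x => g i x * g j x) s μ)
    (horth : ∀ i ∈ S, ∀ j ∈ S, i ≠ j → ∫ x in s, g i x * g j x ∂μ = 0)
    (hpos : ∀ i ∈ S, 0 < ∫ x in s, g i x * g i x ∂μ) :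
    ∑ i ∈ S, (∫ x in s, f x * g i x ∂μ)^2 / (∫ x in s, g i x * g i x ∂μ)
      ≤ ∫ x in s, f x ^ 2 ∂μ := by
  set c : ι → ℝ := fun i => ∫ x in s, f x * g i x ∂μ with hc
  set w : ι → ℝ := fun i => ∫ x in s, g i x * g i x ∂μ with hw
  set a : ι → ℝ := fun i => c i / w i with ha
  have key : 0 ≤ ∫ x in s, (f x - ∑ i ∈ S, a i * g i x) ^ 2 ∂μ :=
    integral_nonneg (fun x => by positivity)
  have expand : ∀ x, (f x - ∑ i ∈ S, a i * g i x) ^ 2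
      = f x ^ 2 - (2 * ∑ i ∈ S, a i * (f x * g i x))
        + ∑ i ∈ S, ∑ j ∈ S, (a i * a j) * (g i x * g j x) := by
    intro x
    have h1 : 2 * f x * ∑ i ∈ S, a i * g i x = 2 * ∑ i ∈ S, a i * (f x * g i x) := by
      rw [Finset.mul_sum, Finset.mul_sum]
      exact Finset.sum_congr rfl fun i _ => by ring
    have h2 : (∑ i ∈ S, a i * g i x)^2 = ∑ i ∈ S, ∑ j ∈ S, (a i * a j) * (g i x * g j x) := by
      rw [sq, Finset.sum_mul_sum]
      exact Finset.sum_congr rfl fun i _ => Finset.sum_congr rfl fun j _ => by ring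
    rw [sub_sq, h1, h2]
  have I2 : IntegrableOn (fun x => 2 * ∑ i ∈ S, a i * (f x * g i x)) s μ := by
    exact (integrable_finset_sum S fun i hi => ((hfg i hi).const_mul (a i))).const_mul 2
  have I3 : IntegrableOn (fun x => ∑ i ∈ S, ∑ j ∈ S, (a i * a j) * (g i x * g j x)) s μ := by
    exact integrable_finset_sum S fun i hi =>
      integrable_finset_sum S fun j hj => ((hgg i hi j hj).const_mul _)
  have hsub : IntegrableOn (fun x => f x ^ 2 - 2 * ∑ i ∈ S, a i * (f x * g i x)) s μ :=
    hf2.sub I2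
  rw [funext expand, integral_add hsub I3, integral_sub hf2 I2] at key
  have e2 : ∫ x in s, (2 * ∑ i ∈ S, a i * (f x * g i x)) ∂μ = 2 * ∑ i ∈ S, a i * c i := by
    rw [integral_const_mul, integral_finset_sum S fun i hi => (hfg i hi).const_mul (a i)]
    congr 1
    exact Finset.sum_congr rfl fun i hi => by rw [integral_const_mul]
  have e3 : ∫ x in s, (∑ i ∈ S, ∑ j ∈ S, (a i * a j) * (g i x * g j x)) ∂μ
      = ∑ i ∈ S, a i ^ 2 * w i := by
    rw [integral_finset_sum S fun i hi =>
      integrable_finset_sum S fun j hj => ((hgg i hi j hj).const_mul _)]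
    refine Finset.sum_congr rfl fun i hi => ?_
    rw [integral_finset_sum S fun j hj => ((hgg i hi j hj).const_mul _)]
    rw [Finset.sum_eq_single i]
    · rw [integral_const_mul]; rw [hw]; ring
    · intro j hj hji
      rw [integral_const_mul, horth i hi j hj (Ne.symm hji), mul_zero]
    · intro h; exact absurd hi h
  rw [e2, e3] at key
  have : ∑ i ∈ S, a i * c i = ∑ i ∈ S, c i ^ 2 / w i := by
    refine Finset.sum_congr rfl fun i hi => ?_
    rw [ha]
    field_simp
  rw [this] at key
  have : ∑ i ∈ S, a i ^ 2 * w i = ∑ i ∈ S, c i ^ 2 / w i := by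
    refine Finset.sum_congr rfl fun i hi => ?_
    have hwi := (hpos i hi).ne'
    rw [ha]
    field_simp
  rw [this] at key
  linarith

def sq2 : Set (ℝ × ℝ) := Ico (0:ℝ) 1 ×ˢ Ico (0:ℝ) 1

lemma measurableSet_sq2 : MeasurableSet sq2 :=
  measurableSet_Ico.prod measurableSet_Ico

lemma volume_sq2_lt_top : volume sq2 < ⊤ := by
  have hc : volume (Icc ((0:ℝ),(0:ℝ)) ((1:ℝ),(1:ℝ))) < ⊤ := isCompact_Icc.measure_lt_top
  refine lt_of_le_of_lt (measure_mono (fun x hx => ?_)) hc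
  obtain ⟨h1, h2⟩ := hx
  exact ⟨⟨h1.1, h2.1⟩, ⟨h1.2.le, h2.2.le⟩⟩

lemma integrableOn_sq2 {f : ℝ × ℝ → ℝ} (hm : Measurable f) (C : ℝ)
    (hb : ∀ x ∈ sq2, |f x| ≤ C) : IntegrableOn f sq2 volume := by
  refine Integrable.mono' (g := fun _ => C)
    (integrableOn_const volume_sq2_lt_top.ne)
    hm.aestronglyMeasurable.restrict ?_
  rw [ae_restrict_iff' measurableSet_sq2]
  exact Filter.Eventually.of_forall fun x hx => hb x hx

/-- 2D Haar function indexed by `((j₁,j₂),(m₁,m₂))`. -/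
noncomputable def G (p : (ℕ × ℕ) × (ℕ × ℕ)) : ℝ × ℝ → ℝ := fun x =>
  H p.1.1 p.2.1 x.1 * H p.1.2 p.2.2 x.2

lemma measurable_G (p : (ℕ × ℕ) × (ℕ × ℕ)) : Measurable (G p) :=
  ((measurable_H _ _).comp measurable_fst).mul ((measurable_H _ _).comp measurable_snd)

lemma abs_G_le (p : (ℕ × ℕ) × (ℕ × ℕ)) (x : ℝ × ℝ) : |G p x| ≤ 1 := by
  rw [G, abs_mul]
  exact mul_le_one₀ (abs_H_le _ _ _) (abs_nonneg _) (abs_H_le _ _ _)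

lemma Hsub01 {j m : ℕ} (hm : m < 2^j) {t : ℝ} (h : H j m t ≠ 0) : 0 ≤ t ∧ t < 1 := by
  obtain ⟨h1, h2⟩ := H_support h
  have hsup : ((m:ℝ) + 1) * dd j ≤ 1 := by
    have hc : ((m:ℝ) + 1) ≤ (2:ℝ)^j := by exact_mod_cast hm
    have hp : (0:ℝ) < (2:ℝ)^j := by positivity
    unfold dd
    rw [mul_inv_le_iff₀ hp, one_mul]
    exact hc
  have hd := (dd_pos j).le
  constructor
  · have : (0:ℝ) ≤ (m:ℝ) * dd j := by positivity
    linarith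
  · nlinarith

lemma G_support {p : (ℕ × ℕ) × (ℕ × ℕ)} (h1 : p.2.1 < 2^p.1.1) (h2 : p.2.2 < 2^p.1.2)
    {x : ℝ × ℝ} (hx : x ∉ sq2) : G p x = 0 := by
  by_contra h
  apply hx
  have hne : H p.1.1 p.2.1 x.1 ≠ 0 ∧ H p.1.2 p.2.2 x.2 ≠ 0 := by
    constructor <;> intro h0 <;> apply h <;> rw [G] <;> simp [h0]
  obtain ⟨a1, a2⟩ := Hsub01 h1 hne.1
  obtain ⟨b1, b2⟩ := Hsub01 h2 hne.2
  exact ⟨⟨a1, a2⟩, ⟨b1, b2⟩⟩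

lemma integral_prod_mul' (f g : ℝ → ℝ) :
    ∫ x : ℝ × ℝ, f x.1 * g x.2 = (∫ t, f t) * ∫ t, g t := by
  rw [Measure.volume_eq_prod]
  exact integral_prod_mul f g

lemma setIntegral_sq2_G_mul_G (p q : (ℕ × ℕ) × (ℕ × ℕ)) (h1 : p.2.1 < 2^p.1.1)
    (h2 : p.2.2 < 2^p.1.2) :
    ∫ x in sq2, G p x * G q x
      = (∫ t, H p.1.1 p.2.1 t * H q.1.1 q.2.1 t) * ∫ t, H p.1.2 p.2.2 t * H q.1.2 q.2.2 t := by
  rw [setIntegral_eq_integral_of_forall_compl_eq_zero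
    (fun x hx => by rw [G_support h1 h2 hx, zero_mul])]
  have : (fun x : ℝ × ℝ => G p x * G q x) = fun x : ℝ × ℝ =>
      (H p.1.1 p.2.1 x.1 * H q.1.1 q.2.1 x.1) * (H p.1.2 p.2.2 x.2 * H q.1.2 q.2.2 x.2) := by
    funext x; rw [G, G]; ring
  rw [this]
  exact integral_prod_mul' (fun t => H p.1.1 p.2.1 t * H q.1.1 q.2.1 t)
    (fun t => H p.1.2 p.2.2 t * H q.1.2 q.2.2 t)

lemma G_orth {p q : (ℕ × ℕ) × (ℕ × ℕ)} (h1 : p.2.1 < 2^p.1.1) (h2 : p.2.2 < 2^p.1.2)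
    (hne : p ≠ q) : ∫ x in sq2, G p x * G q x = 0 := by
  rw [setIntegral_sq2_G_mul_G p q h1 h2]
  rcases eq_or_ne (p.1.1, p.2.1) (q.1.1, q.2.1) with he | hd
  · have hd2 : (p.1.2, p.2.2) ≠ (q.1.2, q.2.2) := by
      intro he2
      apply hne
      obtain ⟨e1, e2⟩ := Prod.mk.injEq .. ▸ he
      obtain ⟨e3, e4⟩ := Prod.mk.injEq .. ▸ he2
      exact Prod.ext (Prod.ext e1 e3) (Prod.ext e2 e4)
    rw [integral_H_mul_H hd2, mul_zero]
  · rw [integral_H_mul_H hd, zero_mul]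

lemma G_norm_sq {p : (ℕ × ℕ) × (ℕ × ℕ)} (h1 : p.2.1 < 2^p.1.1) (h2 : p.2.2 < 2^p.1.2) :
    ∫ x in sq2, G p x * G p x = dd p.1.1 * dd p.1.2 := by
  rw [setIntegral_sq2_G_mul_G p p h1 h2, integral_H_sq, integral_H_sq]

lemma measurable_discrepancy2 (N : ℕ) (P : Finset (ℝ × ℝ)) :
    Measurable (discrepancy2 N P) := by
  unfold discrepancy2
  refine Measurable.sub ?_ ?_
  · exact Finset.measurable_sum P fun z _ =>
      measurable_const.indicator (measurableSet_Ioo.prod measurableSet_Ioo)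
  · exact (measurable_fst.mul measurable_snd).const_mul _

lemma abs_discrepancy2_le (N : ℕ) (P : Finset (ℝ × ℝ)) (hcard : P.card = N)
    {x : ℝ × ℝ} (hx : x ∈ sq2) : |discrepancy2 N P x| ≤ 2 * N := by
  unfold discrepancy2
  have hsum0 : (0:ℝ) ≤ ∑ z ∈ P, (Set.Ioo z.1 1 ×ˢ Set.Ioo z.2 1).indicator
      (fun _ => (1 : ℝ)) x :=
    Finset.sum_nonneg fun z _ => indicator_nonneg (fun _ _ => zero_le_one) _
  have hsum1 : (∑ z ∈ P, (Set.Ioo z.1 1 ×ˢ Set.Ioo z.2 1).indicator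
      (fun _ => (1 : ℝ)) x) ≤ N := by
    calc (∑ z ∈ P, (Set.Ioo z.1 1 ×ˢ Set.Ioo z.2 1).indicator (fun _ => (1 : ℝ)) x)
        ≤ ∑ z ∈ P, 1 := Finset.sum_le_sum fun z _ =>
          indicator_le_self' (fun _ _ => zero_le_one) x
      _ = N := by rw [Finset.sum_const, hcard]; simp
  obtain ⟨⟨hx1, hx2⟩, ⟨hx3, hx4⟩⟩ := hx
  have hxy0 : (0:ℝ) ≤ (N:ℝ) * (x.1 * x.2) := by positivity
  have hxy1 : (N:ℝ) * (x.1 * x.2) ≤ N := by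
    have hx : x.1 * x.2 ≤ 1 := by nlinarith
    have hN0 : (0:ℝ) ≤ N := Nat.cast_nonneg N
    nlinarith
  rw [abs_le]
  constructor <;> nlinarith

lemma indicator_ioo_mul_H_integrable (z : ℝ) (j m : ℕ) :
    Integrable (fun t => (Ioo z 1).indicator (1 : ℝ → ℝ) t * H j m t) volume := by
  refine Integrable.mono' ((integrable_H j m).abs)
    ((measurable_const.indicator measurableSet_Ioo).mul (measurable_H j m)).aestronglyMeasurable
    (Filter.Eventually.of_forall fun t => ?_)
  rw [Real.norm_eq_abs, abs_mul]
  by_cases ht : t ∈ Ioo z 1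
  · simp [indicator_of_mem ht]
  · simp [indicator_of_notMem ht, abs_nonneg]

lemma id_mul_H_integrable (j m : ℕ) : Integrable (fun t => t * H j m t) volume := by
  have he : (fun t => t * H j m t) = (fun t =>
      t * (Ico ((m:ℝ) * dd j) ((m:ℝ) * dd j + dd j / 2)).indicator 1 t
      - t * (Ico ((m:ℝ) * dd j + dd j / 2) ((m:ℝ) * dd j + dd j)).indicator 1 t) := by
    funext t; simp [H]; ring
  rw [he]
  refine Integrable.sub ?_ ?_ <;> rw [indicator_id_eq] <;> exact integrable_indicator_id _ _

lemma integrable_prod_mul' {f g : ℝ → ℝ} (hf : Integrable f volume) (hg : Integrable g volume) :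
    Integrable (fun x : ℝ × ℝ => f x.1 * g x.2) volume := by
  rw [Measure.volume_eq_prod]
  exact hf.mul_prod hg

lemma indicator_prod_eq (z : ℝ × ℝ) (x : ℝ × ℝ) :
    (Set.Ioo z.1 1 ×ˢ Set.Ioo z.2 1).indicator (fun _ => (1 : ℝ)) x
      = (Ioo z.1 1).indicator (1 : ℝ → ℝ) x.1 * (Ioo z.2 1).indicator (1 : ℝ → ℝ) x.2 := by
  by_cases h1 : x.1 ∈ Ioo z.1 1 <;> by_cases h2 : x.2 ∈ Ioo z.2 1
  · rw [indicator_of_mem (Set.mem_prod.2 ⟨h1, h2⟩), indicator_of_mem h1, indicator_of_mem h2]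
    simp
  all_goals
    rw [indicator_of_notMem
      (show x ∉ Ioo z.1 1 ×ˢ Ioo z.2 1 by rw [Set.mem_prod]; tauto)]
    simp [indicator_of_notMem, *]

/-- The Haar coefficient of the discrepancy function on an empty dyadic rectangle. -/
lemma coeff (N : ℕ) (P : Finset (ℝ × ℝ)) {j₁ j₂ m₁ m₂ : ℕ}
    (h1 : m₁ < 2^j₁) (h2 : m₂ < 2^j₂)
    (hemp : ∀ z ∈ P, ¬ ((((m₁:ℝ) * dd j₁ ≤ z.1 ∧ z.1 < (m₁:ℝ) * dd j₁ + dd j₁)) ∧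
      (((m₂:ℝ) * dd j₂ ≤ z.2 ∧ z.2 < (m₂:ℝ) * dd j₂ + dd j₂)))) :
    ∫ x in sq2, discrepancy2 N P x * G ((j₁,j₂),(m₁,m₂)) x
      = -(N:ℝ) * (dd j₁ * dd j₁ * (dd j₂ * dd j₂)) / 16 := by
  rw [setIntegral_eq_integral_of_forall_compl_eq_zero
    (fun x hx => by rw [G_support h1 h2 hx, mul_zero])]
  have hrw : (fun x : ℝ × ℝ => discrepancy2 N P x * G ((j₁,j₂),(m₁,m₂)) x)
      = fun x : ℝ × ℝ =>
        (∑ z ∈ P, ((Ioo z.1 1).indicator (1 : ℝ → ℝ) x.1 * H j₁ m₁ x.1)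
          * ((Ioo z.2 1).indicator (1 : ℝ → ℝ) x.2 * H j₂ m₂ x.2))
        - (N:ℝ) * ((x.1 * H j₁ m₁ x.1) * (x.2 * H j₂ m₂ x.2)) := by
    funext x
    unfold discrepancy2 G
    rw [sub_mul, Finset.sum_mul]
    congr 1
    · refine Finset.sum_congr rfl fun z _ => ?_
      rw [indicator_prod_eq]
      ring
    · ring
  rw [hrw]
  have hint1 : ∀ z ∈ P, Integrable (fun x : ℝ × ℝ =>
      ((Ioo z.1 1).indicator (1 : ℝ → ℝ) x.1 * H j₁ m₁ x.1)
        * ((Ioo z.2 1).indicator (1 : ℝ → ℝ) x.2 * H j₂ m₂ x.2)) volume := fun z _ =>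
    integrable_prod_mul' (indicator_ioo_mul_H_integrable _ _ _)
      (indicator_ioo_mul_H_integrable _ _ _)
  have hint2 : Integrable (fun x : ℝ × ℝ =>
      (N:ℝ) * ((x.1 * H j₁ m₁ x.1) * (x.2 * H j₂ m₂ x.2))) volume :=
    (integrable_prod_mul' (id_mul_H_integrable _ _) (id_mul_H_integrable _ _)).const_mul _
  rw [integral_sub (integrable_finset_sum P hint1) hint2,
    integral_finset_sum P hint1, integral_const_mul]
  have hzero : ∀ z ∈ P, ∫ x : ℝ × ℝ,
      ((Ioo z.1 1).indicator (1 : ℝ → ℝ) x.1 * H j₁ m₁ x.1)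
        * ((Ioo z.2 1).indicator (1 : ℝ → ℝ) x.2 * H j₂ m₂ x.2) = 0 := by
    intro z hz
    rw [integral_prod_mul' (fun t => (Ioo z.1 1).indicator (1 : ℝ → ℝ) t * H j₁ m₁ t)
      (fun t => (Ioo z.2 1).indicator (1 : ℝ → ℝ) t * H j₂ m₂ t)]
    rcases not_and_or.1 (hemp z hz) with hc | hc
    · have hd : z.1 < (m₁:ℝ) * dd j₁ ∨ (m₁:ℝ) * dd j₁ + dd j₁ ≤ z.1 := by
        rcases not_and_or.1 hc with h | h
        · exact Or.inl (lt_of_not_ge h)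
        · exact Or.inr (le_of_not_gt h)
      rw [integral_ioo_mul_H h1 hd, zero_mul]
    · have hd : z.2 < (m₂:ℝ) * dd j₂ ∨ (m₂:ℝ) * dd j₂ + dd j₂ ≤ z.2 := by
        rcases not_and_or.1 hc with h | h
        · exact Or.inl (lt_of_not_ge h)
        · exact Or.inr (le_of_not_gt h)
      rw [integral_ioo_mul_H h2 hd, mul_zero]
  rw [Finset.sum_eq_zero hzero,
    integral_prod_mul' (fun t => t * H j₁ m₁ t) (fun t => t * H j₂ m₂ t),
    integral_id_H, integral_id_H]
  ring

open Classical in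
/-- The set of positions of empty dyadic rectangles at scale `j`. -/
noncomputable def Erect (P : Finset (ℝ × ℝ)) (j : ℕ × ℕ) : Finset (ℕ × ℕ) :=
  (Finset.range (2^j.1) ×ˢ Finset.range (2^j.2)).filter
    (fun m => ∀ z ∈ P, ¬ ((((m.1:ℝ) * dd j.1 ≤ z.1 ∧ z.1 < (m.1:ℝ) * dd j.1 + dd j.1)) ∧
      (((m.2:ℝ) * dd j.2 ≤ z.2 ∧ z.2 < (m.2:ℝ) * dd j.2 + dd j.2))))

lemma mem_Erect_lt {P : Finset (ℝ × ℝ)} {j m : ℕ × ℕ} (h : m ∈ Erect P j) :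
    m.1 < 2^j.1 ∧ m.2 < 2^j.2 := by
  have := (Finset.mem_filter.1 h).1
  rw [Finset.mem_product] at this
  exact ⟨Finset.mem_range.1 this.1, Finset.mem_range.1 this.2⟩

lemma mem_Erect_empty {P : Finset (ℝ × ℝ)} {j m : ℕ × ℕ} (h : m ∈ Erect P j) :
    ∀ z ∈ P, ¬ ((((m.1:ℝ) * dd j.1 ≤ z.1 ∧ z.1 < (m.1:ℝ) * dd j.1 + dd j.1)) ∧
      (((m.2:ℝ) * dd j.2 ≤ z.2 ∧ z.2 < (m.2:ℝ) * dd j.2 + dd j.2))) := by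
  have := (Finset.mem_filter.1 h).2
  simpa using this

lemma card_Erect {N : ℕ} {P : Finset (ℝ × ℝ)}
    (hP : ↑P ⊆ Ico (0:ℝ) 1 ×ˢ Ico (0:ℝ) 1) (hcard : P.card = N) (j : ℕ × ℕ) :
    (2:ℝ)^(j.1+j.2) - N ≤ (Erect P j).card := by
  classical
  set R := Finset.range (2^j.1) ×ˢ Finset.range (2^j.2) with hR
  set p : ℕ × ℕ → Prop :=
    (fun m => ∀ z ∈ P, ¬ ((((m.1:ℝ) * dd j.1 ≤ z.1 ∧ z.1 < (m.1:ℝ) * dd j.1 + dd j.1)) ∧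
      (((m.2:ℝ) * dd j.2 ≤ z.2 ∧ z.2 < (m.2:ℝ) * dd j.2 + dd j.2)))) with hp
  have hsplit : (R.filter p).card + (R.filter (fun m => ¬ p m)).card = R.card :=
    Finset.card_filter_add_card_filter_not _
  have hEcard : (Erect P j).card = (R.filter p).card := by
    rw [Erect]
  have hsub : R.filter (fun m => ¬ p m) ⊆
      P.image (fun z : ℝ × ℝ => (⌊z.1 * 2^j.1⌋₊, ⌊z.2 * 2^j.2⌋₊)) := by
    intro m hm
    obtain ⟨hmR, hmp⟩ := Finset.mem_filter.1 hm
    simp only [hp] at hmp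
    push_neg at hmp
    obtain ⟨z, hz, ⟨hz11, hz12⟩, hz21, hz22⟩ := hmp
    refine Finset.mem_image.2 ⟨z, hz, ?_⟩
    have hd1 : dd j.1 * 2^j.1 = 1 := by unfold dd; field_simp
    have hd2 : dd j.2 * 2^j.2 = 1 := by unfold dd; field_simp
    have hp1 : (0:ℝ) < (2:ℝ)^j.1 := by positivity
    have hp2 : (0:ℝ) < (2:ℝ)^j.2 := by positivity
    have hz0 := hP hz
    have f1 : ⌊z.1 * 2^j.1⌋₊ = m.1 := by
      rw [Nat.floor_eq_iff (by nlinarith [hz0.1.1])]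
      constructor
      · nlinarith
      · nlinarith
    have f2 : ⌊z.2 * 2^j.2⌋₊ = m.2 := by
      rw [Nat.floor_eq_iff (by nlinarith [hz0.2.1])]
      constructor
      · nlinarith
      · nlinarith
    rw [f1, f2]
  have hFle : (R.filter (fun m => ¬ p m)).card ≤ N := by
    calc (R.filter (fun m => ¬ p m)).card
        ≤ (P.image (fun z : ℝ × ℝ => (⌊z.1 * 2^j.1⌋₊, ⌊z.2 * 2^j.2⌋₊))).card :=
          Finset.card_le_card hsub
      _ ≤ P.card := Finset.card_image_le
      _ = N := hcard
  have hRcard : R.card = 2^j.1 * 2^j.2 := by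
    rw [hR, Finset.card_product, Finset.card_range, Finset.card_range]
  have hN : 2^j.1 * 2^j.2 ≤ (Erect P j).card + N := by
    rw [hEcard]
    omega
  have hNr : ((2^j.1 * 2^j.2 : ℕ):ℝ) ≤ (((Erect P j).card + N : ℕ):ℝ) := Nat.cast_le.2 hN
  push_cast at hNr
  rw [pow_add]
  linarith

end RothAux

theorem L2_discrepancy_sq_lower_bound_sum (N : ℕ) (hN : 2 ≤ N) (P : Finset (ℝ × ℝ))
    (hP : ↑P ⊆ Set.Ico (0 : ℝ) 1 ×ˢ Set.Ico (0 : ℝ) 1) (hcard : P.card = N) :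
    (N : ℝ) ^ 2 *
      ∑' j : ℕ × ℕ,
        (if Nat.clog 2 N ≤ j.1 + j.2 then
          (2 : ℝ) ^ (j.1 + j.2) * ((2 : ℝ) ^ (j.1 + j.2) - N) *
            (2 : ℝ) ^ (-4 * (j.1 : ℤ) - 4 * (j.2 : ℤ) - 8)
        else 0)
      ≤ ∫ x in Set.Ico (0 : ℝ) 1 ×ˢ Set.Ico (0 : ℝ) 1, (discrepancy2 N P x) ^ 2 := by
  classical
  open RothAux in
  set M := Nat.clog 2 N with hM
  set f := discrepancy2 N P with hf
  set u : ℕ × ℕ → ℝ := fun j =>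
    if M ≤ j.1 + j.2 then
      (2 : ℝ) ^ (j.1 + j.2) * ((2 : ℝ) ^ (j.1 + j.2) - N) *
        (2 : ℝ) ^ (-4 * (j.1 : ℤ) - 4 * (j.2 : ℤ) - 8)
    else 0 with hu
  show (N:ℝ)^2 * ∑' j, u j ≤ ∫ x in RothAux.sq2, f x ^ 2
  have hNle : ∀ s : ℕ, M ≤ s → (N:ℝ) ≤ (2:ℝ)^s := by
    intro s hs
    calc (N:ℝ) ≤ ((2^M : ℕ):ℝ) := by exact_mod_cast Nat.le_pow_clog one_lt_two N
      _ = (2:ℝ)^M := by push_cast; ring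
      _ ≤ (2:ℝ)^s := pow_le_pow_right₀ one_le_two hs
  have hu0 : ∀ j : ℕ × ℕ, 0 ≤ u j := by
    intro j
    rw [hu]
    dsimp only
    split_ifs with h
    · have h2 := hNle _ h
      have h3 : (0:ℝ) ≤ (2:ℝ)^(-4 * (j.1 : ℤ) - 4 * (j.2 : ℤ) - 8) := by positivity
      have h1 : (0:ℝ) ≤ (2:ℝ)^(j.1+j.2) := by positivity
      exact mul_nonneg (mul_nonneg h1 (by linarith)) h3
    · exact le_refl _
  have hmain : ∀ T : Finset (ℕ × ℕ), ∑ j ∈ T, (N:ℝ)^2 * u j ≤ ∫ x in sq2, f x ^ 2 := by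
    intro T
    set T' := T.filter (fun j => M ≤ j.1 + j.2) with hT'
    set S : Finset ((ℕ×ℕ)×(ℕ×ℕ)) :=
      T'.biUnion (fun j => (Erect P j).image (fun m => (j, m))) with hS
    have hSmem : ∀ p ∈ S, p.2 ∈ Erect P p.1 := by
      intro p hp
      rw [hS] at hp
      obtain ⟨j, hj, hmem⟩ := Finset.mem_biUnion.1 hp
      obtain ⟨m, hm, rfl⟩ := Finset.mem_image.1 hmem
      exact hm
    have hGb : ∀ p ∈ S, p.2.1 < 2^p.1.1 ∧ p.2.2 < 2^p.1.2 :=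
      fun p hp => mem_Erect_lt (hSmem p hp)
    have hmf : Measurable f := measurable_discrepancy2 N P
    have hI2 : ∀ x ∈ sq2, |f x| ≤ 2*N := fun x hx => abs_discrepancy2_le N P hcard hx
    have hf2 : IntegrableOn (fun x => f x ^ 2) sq2 volume := by
      refine integrableOn_sq2 (hmf.pow_const 2) ((2*(N:ℝ))^2) (fun x hx => ?_)
      rw [abs_pow]
      exact pow_le_pow_left₀ (abs_nonneg _) (hI2 x hx) 2
    have hfg : ∀ i ∈ S, IntegrableOn (fun x => f x * G i x) sq2 volume := by
      intro i _
      refine integrableOn_sq2 (hmf.mul (measurable_G i)) (2*(N:ℝ)) (fun x hx => ?_)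
      rw [abs_mul]
      calc |f x| * |G i x| ≤ (2*(N:ℝ)) * 1 :=
        mul_le_mul (hI2 x hx) (abs_G_le i x) (abs_nonneg _) (by positivity)
        _ = 2*(N:ℝ) := mul_one _
    have hgg : ∀ i ∈ S, ∀ k ∈ S, IntegrableOn (fun x => G i x * G k x) sq2 volume := by
      intro i _ k _
      refine integrableOn_sq2 ((measurable_G i).mul (measurable_G k)) 1 (fun x hx => ?_)
      rw [abs_mul]
      exact mul_le_one₀ (abs_G_le i x) (abs_nonneg _) (abs_G_le k x)
    have horth : ∀ i ∈ S, ∀ k ∈ S, i ≠ k → ∫ x in sq2, G i x * G k x = 0 := by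
      intro i hi k _ hne
      exact G_orth (hGb i hi).1 (hGb i hi).2 hne
    have hposG : ∀ i ∈ S, 0 < ∫ x in sq2, G i x * G i x := by
      intro i hi
      rw [G_norm_sq (hGb i hi).1 (hGb i hi).2]
      exact mul_pos (dd_pos _) (dd_pos _)
    have hbessel := bessel volume sq2 f S G hf2 hfg hgg horth hposG
    have hdisj : (↑T' : Set (ℕ×ℕ)).PairwiseDisjoint
        (fun j => (Erect P j).image (fun m => (j, m))) := by
      intro a _ b _ hab
      refine Finset.disjoint_left.2 fun p hpa hpb => hab ?_
      obtain ⟨m, _, rfl⟩ := Finset.mem_image.1 hpa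
      obtain ⟨m', _, he⟩ := Finset.mem_image.1 hpb
      exact ((Prod.mk.injEq .. ▸ he.symm).1)
    have hsum1 : ∑ i ∈ S, (∫ x in sq2, f x * G i x)^2 / (∫ x in sq2, G i x * G i x)
        = ∑ j ∈ T', ∑ m ∈ Erect P j, ((∫ x in sq2, f x * G (j,m) x)^2
            / (∫ x in sq2, G (j,m) x * G (j,m) x)) := by
      rw [hS, Finset.sum_biUnion hdisj]
      refine Finset.sum_congr rfl fun j _ => ?_
      rw [Finset.sum_image (fun m _ m' _ h => (Prod.mk.injEq .. ▸ h).2)]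
    have hval : ∀ j ∈ T', ∀ m ∈ Erect P j,
        (∫ x in sq2, f x * G (j,m) x)^2 / (∫ x in sq2, G (j,m) x * G (j,m) x)
          = (N:ℝ)^2 * (dd j.1)^3 * (dd j.2)^3 / 256 := by
      intro j _ m hm
      have hb := mem_Erect_lt hm
      have hc : ∫ x in sq2, f x * G (j,m) x
          = -(N:ℝ) * (dd j.1 * dd j.1 * (dd j.2 * dd j.2)) / 16 :=
        coeff N P hb.1 hb.2 (mem_Erect_empty hm)
      have hw : ∫ x in sq2, G (j,m) x * G (j,m) x = dd j.1 * dd j.2 :=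
        G_norm_sq hb.1 hb.2
      rw [hc, hw]
      have h1 := (dd_pos j.1).ne'
      have h2 := (dd_pos j.2).ne'
      field_simp
      ring
    calc ∑ j ∈ T, (N:ℝ)^2 * u j
        = ∑ j ∈ T', (N:ℝ)^2 * ((2:ℝ)^(j.1+j.2) * ((2:ℝ)^(j.1+j.2) - N)
            * (2:ℝ)^(-4*(j.1:ℤ) - 4*(j.2:ℤ) - 8)) := by
          rw [hT', Finset.sum_filter]
          refine Finset.sum_congr rfl fun j _ => ?_
          rw [hu]
          by_cases h : M ≤ j.1 + j.2 <;> simp [h]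
      _ ≤ ∑ j ∈ T', ∑ m ∈ Erect P j, ((∫ x in sq2, f x * G (j,m) x)^2
            / (∫ x in sq2, G (j,m) x * G (j,m) x)) := by
          refine Finset.sum_le_sum fun j hj => ?_
          rw [Finset.sum_congr rfl (hval j hj), Finset.sum_const, nsmul_eq_mul]
          have hcardE := card_Erect hP hcard j
          have hM2 : (N:ℝ) ≤ (2:ℝ)^(j.1+j.2) := hNle _ (Finset.mem_filter.1 hj).2
          have hzp : (2:ℝ)^(-4*(j.1:ℤ) - 4*(j.2:ℤ) - 8)
              = ((dd j.1)^4 * (dd j.2)^4) / 256 := by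
            have he : (-4*(j.1:ℤ) - 4*(j.2:ℤ) - 8) = -((4*j.1+4*j.2+8 : ℕ) : ℤ) := by
              push_cast; ring
            rw [he, zpow_neg, zpow_natCast,
              show 4*j.1+4*j.2+8 = j.1*4 + (j.2*4 + 8) from by ring,
              pow_add, pow_add, pow_mul, pow_mul]
            unfold dd
            rw [mul_inv, mul_inv]
            norm_num
            ring
          rw [hzp]
          have hkey : (N:ℝ)^2 * ((2:ℝ)^(j.1+j.2) * ((2:ℝ)^(j.1+j.2) - N)
              * (((dd j.1)^4 * (dd j.2)^4) / 256))
              = ((2:ℝ)^(j.1+j.2) - N) * ((N:ℝ)^2 * (dd j.1)^3 * (dd j.2)^3 / 256) := by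
            have he2 : (2:ℝ)^(j.1+j.2) * ((dd j.1)^4*(dd j.2)^4)
                = (dd j.1)^3*(dd j.2)^3 := by
              unfold dd
              rw [pow_add]
              field_simp
            linear_combination ((N:ℝ)^2 * ((2:ℝ)^(j.1+j.2) - N) / 256) * he2
          rw [hkey]
          refine mul_le_mul_of_nonneg_right hcardE ?_
          have d1 := (dd_pos j.1).le
          have d2 := (dd_pos j.2).le
          positivity
      _ = ∑ i ∈ S, (∫ x in sq2, f x * G i x)^2 / (∫ x in sq2, G i x * G i x) := hsum1.symm
      _ ≤ ∫ x in sq2, f x ^ 2 := hbessel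
  rw [← tsum_mul_left]
  exact Summable.tsum_le_of_sum_le
    (summable_of_sum_le (fun j => mul_nonneg (by positivity) (hu0 j)) hmain) hmain
end

section
/- For every N ∈ ℕ with N ≥ 2 and every N-point set P ⊂ [0,1)^d, ‖D_P‖_{L₂}² ≥ 2^{-4d}·(N·2^{-M})²·(4/3)·M^{d-1}/(d-1)! − 2^{-4d}·(N·2^{-M})³·(8/7)·M^{d-1}/(d-1)!, where M = ⌈log₂ N⌉. -/
open MeasureTheory

/-- The discrepancy function of an `N`-point set `P ⊂ [0,1)^d`. -/
noncomputable def discrepancyD (d N : ℕ) (P : Finset (Fin d → ℝ)) (x : Fin d → ℝ) : ℝ :=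
  (∑ z ∈ P, (Set.univ.pi (fun i => Set.Ioo (z i) 1)).indicator (fun _ => (1 : ℝ)) x) -
    N * ∏ i, x i

open Set

noncomputable section
namespace RothAux

/-- dyadic interval of generation `k+1`: `[m/2^(k+1), (m+1)/2^(k+1))`. -/
def hI (k m : ℕ) : Set ℝ := Set.Ico ((m : ℝ) / 2^(k+1)) (((m:ℝ)+1) / 2^(k+1))

/-- 1-d Haar function: `-1` on left half of `[j/2^k,(j+1)/2^k)`, `+1` on right half. -/
def haar (k j : ℕ) (t : ℝ) : ℝ :=
  (hI k (2*j+1)).indicator (fun _ => (1:ℝ)) t - (hI k (2*j)).indicator (fun _ => (1:ℝ)) t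

lemma mem_hI_iff {k m : ℕ} {t : ℝ} : t ∈ hI k m ↔ ⌊t * 2^(k+1)⌋ = (m : ℤ) := by
  have h2 : (0:ℝ) < 2^(k+1) := by positivity
  rw [hI, Set.mem_Ico, Int.floor_eq_iff, div_le_iff₀ h2, lt_div_iff₀ h2]
  push_cast
  tauto

lemma measurableSet_hI (k m : ℕ) : MeasurableSet (hI k m) := measurableSet_Ico

lemma volume_hI (k m : ℕ) : volume (hI k m) = ENNReal.ofReal ((2:ℝ)⁻¹^(k+1)) := by
  rw [hI, Real.volume_Ico]
  congr 1
  field_simp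
  rw [← mul_pow]; ring

lemma haar_eq_ite (k j : ℕ) (t : ℝ) :
    haar k j t = if ⌊t * 2^(k+1)⌋ = (2*j : ℤ) then -1
      else if ⌊t * 2^(k+1)⌋ = (2*j+1 : ℤ) then 1 else 0 := by
  classical
  rw [haar, Set.indicator_apply, Set.indicator_apply]
  by_cases h1 : ⌊t * 2^(k+1)⌋ = (2*j : ℤ) <;> by_cases h2 : ⌊t * 2^(k+1)⌋ = (2*j+1 : ℤ) <;>
    simp_all [mem_hI_iff] <;> push_cast <;> omega

lemma haar_support {k j : ℕ} {t : ℝ} (h : haar k j t ≠ 0) :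
    ⌊t * 2^(k+1)⌋ = (2*j : ℤ) ∨ ⌊t * 2^(k+1)⌋ = (2*j+1 : ℤ) := by
  rw [haar_eq_ite] at h
  by_cases h1 : ⌊t * 2^(k+1)⌋ = (2*j : ℤ) <;> by_cases h2 : ⌊t * 2^(k+1)⌋ = (2*j+1 : ℤ) <;>
    simp_all

lemma haar_support_Ico {k j : ℕ} {t : ℝ} (h : haar k j t ≠ 0) :
    (j:ℝ)/2^k ≤ t ∧ t < ((j:ℝ)+1)/2^k := by
  have h2 : (0:ℝ) < 2^(k+1) := by positivity
  have h2k : (0:ℝ) < 2^k := by positivity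
  rcases haar_support h with h' | h' <;>
  · rw [Int.floor_eq_iff] at h'
    push_cast at h'
    rw [pow_succ] at h'
    constructor
    · rw [div_le_iff₀ h2k]; linarith [h'.1, h'.2]
    · rw [lt_div_iff₀ h2k]; linarith [h'.1, h'.2]

lemma integrable_indicator_hI (k m : ℕ) :
    Integrable ((hI k m).indicator (fun _ => (1:ℝ))) := by
  rw [integrable_indicator_iff (measurableSet_hI k m)]
  exact integrableOn_const (by rw [volume_hI]; exact ENNReal.ofReal_ne_top)

lemma integrable_haar (k j : ℕ) : Integrable (haar k j) :=
  (integrable_indicator_hI k (2*j+1)).sub (integrable_indicator_hI k (2*j))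

lemma integral_indicator_hI (k m : ℕ) :
    ∫ t, (hI k m).indicator (fun _ => (1:ℝ)) t = (2:ℝ)⁻¹^(k+1) := by
  rw [integral_indicator_const (1:ℝ) (measurableSet_hI k m), measureReal_def, volume_hI,
    ENNReal.toReal_ofReal (by positivity), smul_eq_mul, mul_one]

lemma integral_haar (k j : ℕ) : ∫ t, haar k j t = 0 := by
  rw [show (fun t => haar k j t) = fun t =>
      ((hI k (2*j+1)).indicator (fun _ => (1:ℝ)) t - (hI k (2*j)).indicator (fun _ => (1:ℝ)) t)
    from rfl,
    integral_sub (integrable_indicator_hI _ _) (integrable_indicator_hI _ _),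
    integral_indicator_hI, integral_indicator_hI, sub_self]

lemma integral_id_Ico {a b : ℝ} (hab : a ≤ b) :
    ∫ t, (Ico a b).indicator id t = (b^2 - a^2)/2 := by
  rw [integral_indicator measurableSet_Ico, setIntegral_congr_set Ico_ae_eq_Ioc,
    ← intervalIntegral.integral_of_le hab]
  exact integral_id

lemma integral_id_hI (k m : ℕ) :
    ∫ t, (hI k m).indicator id t = ((2:ℝ)*m+1) / 2 * ((2:ℝ)⁻¹^(k+1))^2 := by
  have h2 : (0:ℝ) < 2^(k+1) := by positivity
  rw [hI, integral_id_Ico (by gcongr; linarith)]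
  field_simp
  have h3 : ((1:ℝ)/2)^(k*2) * 2^(k*2) = 1 := by rw [← mul_pow]; norm_num
  ring_nf
  linear_combination (-(2*(m:ℝ)+1)) * h3

end RothAux

namespace RothAux

lemma mul_indicator_hI (k m : ℕ) (t : ℝ) :
    t * (hI k m).indicator (fun _ => (1:ℝ)) t = (hI k m).indicator id t := by
  classical
  rw [Set.indicator_apply, Set.indicator_apply]
  by_cases h : t ∈ hI k m <;> simp [h]

lemma integrable_indicator_hI_id (k m : ℕ) :
    Integrable ((hI k m).indicator (id : ℝ → ℝ)) := by
  unfold hI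
  rw [integrable_indicator_iff measurableSet_Ico]
  exact (intervalIntegral.intervalIntegrable_id (μ := volume)
    (a := ((m : ℝ) / 2^(k+1))) (b := (((m:ℝ)+1) / 2^(k+1)))).1.congr_set_ae
    Ico_ae_eq_Ioc

lemma integrable_id_haar (k j : ℕ) : Integrable (fun t => t * haar k j t) := by
  have : (fun t => t * haar k j t) =
      fun t => (hI k (2*j+1)).indicator id t - (hI k (2*j)).indicator id t := by
    funext t
    rw [haar, mul_sub, mul_indicator_hI, mul_indicator_hI]
  rw [this]
  exact (integrable_indicator_hI_id _ _).sub (integrable_indicator_hI_id _ _)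

lemma integral_id_haar (k j : ℕ) :
    ∫ t, t * haar k j t = ((2:ℝ)⁻¹^(k+1))^2 := by
  have : (fun t => t * haar k j t) =
      fun t => (hI k (2*j+1)).indicator id t - (hI k (2*j)).indicator id t := by
    funext t
    rw [haar, mul_sub, mul_indicator_hI, mul_indicator_hI]
  rw [this, integral_sub (integrable_indicator_hI_id _ _) (integrable_indicator_hI_id _ _),
    integral_id_hI, integral_id_hI]
  push_cast
  ring

lemma haar_sq (k j : ℕ) (t : ℝ) :
    haar k j t ^ 2 = (hI k (2*j+1)).indicator (fun _ => (1:ℝ)) t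
      + (hI k (2*j)).indicator (fun _ => (1:ℝ)) t := by
  classical
  rw [haar, Set.indicator_apply, Set.indicator_apply]
  by_cases h1 : t ∈ hI k (2*j+1) <;> by_cases h2 : t ∈ hI k (2*j)
  · exfalso
    rw [mem_hI_iff] at h1 h2
    omega
  all_goals simp [h1, h2]

lemma integrable_haar_sq (k j : ℕ) : Integrable (fun t => haar k j t ^ 2) := by
  have : (fun t => haar k j t ^ 2) = fun t =>
      (hI k (2*j+1)).indicator (fun _ => (1:ℝ)) t + (hI k (2*j)).indicator (fun _ => (1:ℝ)) t :=
    funext (haar_sq k j)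
  rw [this]
  exact (integrable_indicator_hI _ _).add (integrable_indicator_hI _ _)

lemma integral_haar_sq (k j : ℕ) : ∫ t, haar k j t ^ 2 = (2:ℝ)⁻¹^k := by
  have : (fun t => haar k j t ^ 2) = fun t =>
      (hI k (2*j+1)).indicator (fun _ => (1:ℝ)) t + (hI k (2*j)).indicator (fun _ => (1:ℝ)) t :=
    funext (haar_sq k j)
  rw [this, integral_add (integrable_indicator_hI _ _) (integrable_indicator_hI _ _),
    integral_indicator_hI, integral_indicator_hI]
  rw [pow_succ]
  ring

lemma haar_mul_haar_same_scale {k j j' : ℕ} (hjj : j ≠ j') (t : ℝ) :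
    haar k j t * haar k j' t = 0 := by
  by_cases h1 : haar k j t = 0
  · rw [h1, zero_mul]
  by_cases h2 : haar k j' t = 0
  · rw [h2, mul_zero]
  exfalso
  rcases haar_support h1 with h | h <;> rcases haar_support h2 with h' | h' <;> omega

lemma haar_mul_haar_lt {k k' j j' : ℕ} (hkk : k < k') :
    ∃ C : ℝ, ∀ t, haar k j t * haar k' j' t = C * haar k' j' t := by
  set e := k' - k - 1 with he
  set q : ℕ := j' / 2^e with hq
  refine ⟨if (q : ℤ) = 2*j then (-1:ℝ) else if (q:ℤ) = 2*j+1 then 1 else 0, fun t => ?_⟩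
  by_cases h0 : haar k' j' t = 0
  · rw [h0, mul_zero, mul_zero]
  have hmem := haar_support_Ico h0
  have hfloor : ⌊t * 2^(k+1)⌋ = (q : ℤ) := by
    have hk' : k' = (k+1) + e := by omega
    have h2e : (0:ℝ) < 2^e := by positivity
    have h2k : (0:ℝ) < 2^(k+1) := by positivity
    have hsplit : (2:ℝ)^k' = 2^(k+1) * 2^e := by rw [hk', pow_add]
    have hql : q * 2^e ≤ j' := Nat.div_mul_le_self _ _
    have hqu : j' < (q+1) * 2^e := by
      have h2 : j' % 2^e < 2^e := Nat.mod_lt _ (Nat.two_pow_pos e)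
      calc j' = 2^e * q + j' % 2^e := (Nat.div_add_mod j' (2^e)).symm
        _ < 2^e * q + 2^e := by omega
        _ = (q+1) * 2^e := by ring
    rw [Int.floor_eq_iff]
    constructor
    · push_cast
      have h1 : ((q:ℝ) * 2^e) / 2^k' ≤ (j':ℝ) / 2^k' := by
        gcongr
        exact_mod_cast hql
      have h2 : ((q:ℝ) * 2^e) / 2^k' = q / 2^(k+1) := by
        rw [hsplit]; field_simp
      have := le_trans (h2 ▸ h1) hmem.1
      rw [div_le_iff₀ h2k] at this
      linarith
    · push_cast
      have h1 : ((j':ℝ)+1) / 2^k' ≤ ((q:ℝ)+1) * 2^e / 2^k' := by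
        gcongr
        push_cast
        exact_mod_cast hqu
      have h2 : ((q:ℝ)+1) * 2^e / 2^k' = ((q:ℝ)+1) / 2^(k+1) := by
        rw [hsplit]; field_simp
      have := lt_of_lt_of_le hmem.2 (h2 ▸ h1)
      rw [lt_div_iff₀ h2k] at this
      linarith
  rw [haar_eq_ite, hfloor]

lemma integral_haar_mul_aux {k j k' j' : ℕ} (hkk : k ≤ k') (hne : (k, j) ≠ (k', j')) :
    ∫ t, haar k j t * haar k' j' t = 0 := by
  rcases lt_or_eq_of_le hkk with hlt | rfl
  · obtain ⟨C, hC⟩ := haar_mul_haar_lt (j := j) (j' := j') hlt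
    rw [show (fun t => haar k j t * haar k' j' t) = fun t => C * haar k' j' t from funext hC,
      integral_const_mul, integral_haar, mul_zero]
  · have hjj : j ≠ j' := by simpa using hne
    rw [show (fun t => haar k j t * haar k j' t) = fun _ => (0:ℝ) from
      funext (haar_mul_haar_same_scale hjj), integral_zero]

lemma integral_haar_mul {k j k' j' : ℕ} (hne : (k, j) ≠ (k', j')) :
    ∫ t, haar k j t * haar k' j' t = 0 := by
  rcases le_total k k' with h | h
  · exact integral_haar_mul_aux h hne
  · rw [show (fun t => haar k j t * haar k' j' t) = fun t => haar k' j' t * haar k j t from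
      funext (fun t => mul_comm _ _)]
    exact integral_haar_mul_aux h (by simpa [Prod.ext_iff, eq_comm, and_comm] using hne)

lemma abs_haar_le (k j : ℕ) (t : ℝ) : |haar k j t| ≤ 1 := by
  rw [haar_eq_ite]
  split_ifs <;> norm_num

lemma measurable_haar (k j : ℕ) : Measurable (haar k j) :=
  ((measurable_const (a := (1:ℝ))).indicator (measurableSet_hI _ _)).sub
    ((measurable_const (a := (1:ℝ))).indicator (measurableSet_hI _ _))

lemma integrable_haar_mul (k j k' j' : ℕ) :
    Integrable (fun t => haar k j t * haar k' j' t) := by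
  refine (integrable_haar k' j').abs.mono'
    (((measurable_haar k j).mul (measurable_haar k' j')).aestronglyMeasurable) ?_
  filter_upwards with t
  rw [norm_mul]
  calc ‖haar k j t‖ * ‖haar k' j' t‖ ≤ 1 * ‖haar k' j' t‖ := by
        gcongr
        exact abs_haar_le k j t
    _ = |haar k' j' t| := by rw [one_mul, Real.norm_eq_abs]

end RothAux

namespace RothAux

lemma integral_Ioo_haar_left {k j : ℕ} {z : ℝ} (hz : z < (j:ℝ)/2^k) (hj : j + 1 ≤ 2^k) :
    ∫ t, (Ioo z 1).indicator (fun _ => (1:ℝ)) t * haar k j t = 0 := by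
  have heq : (fun t => (Ioo z 1).indicator (fun _ => (1:ℝ)) t * haar k j t) = haar k j := by
    funext t
    by_cases h0 : haar k j t = 0
    · rw [h0, mul_zero]
    have hs := haar_support_Ico h0
    have ht1 : t < 1 := by
      refine lt_of_lt_of_le hs.2 ?_
      rw [div_le_one (by positivity)]
      exact_mod_cast hj
    have : t ∈ Ioo z 1 := ⟨lt_of_lt_of_le hz hs.1, ht1⟩
    rw [Set.indicator_of_mem this, one_mul]
  rw [heq, integral_haar]

lemma integral_Ioo_haar_right {k j : ℕ} {z : ℝ} (hz : ((j:ℝ)+1)/2^k ≤ z) :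
    ∫ t, (Ioo z 1).indicator (fun _ => (1:ℝ)) t * haar k j t = 0 := by
  have heq : (fun t => (Ioo z 1).indicator (fun _ => (1:ℝ)) t * haar k j t)
      = fun _ => (0:ℝ) := by
    funext t
    by_cases h0 : haar k j t = 0
    · rw [h0, mul_zero]
    have hs := haar_support_Ico h0
    have : t ∉ Ioo z 1 :=
      fun ht => absurd ht.1 (not_lt.2 (le_of_lt (lt_of_lt_of_le hs.2 hz)))
    rw [Set.indicator_of_notMem this, zero_mul]
  rw [heq, integral_zero]

lemma integrable_Ioo_haar (z : ℝ) (k j : ℕ) :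
    Integrable (fun t => (Ioo z 1).indicator (fun _ => (1:ℝ)) t * haar k j t) := by
  refine (integrable_haar k j).abs.mono'
    (((measurable_const.indicator measurableSet_Ioo).mul (measurable_haar k j)).aestronglyMeasurable) ?_
  filter_upwards with t
  rw [norm_mul]
  calc ‖(Ioo z 1).indicator (fun _ => (1:ℝ)) t‖ * ‖haar k j t‖ ≤ 1 * ‖haar k j t‖ := by
        gcongr
        rw [Real.norm_eq_abs]
        rcases Set.indicator_eq_zero_or_self (Ioo z 1) (fun _ => (1:ℝ)) t with h | h <;>
          rw [h] <;> norm_num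
    _ = |haar k j t| := by rw [one_mul, Real.norm_eq_abs]

lemma haar_eq_zero_outside {k j : ℕ} (hj : j + 1 ≤ 2^k) {t : ℝ} (ht : t ∉ Ico (0:ℝ) 1) :
    haar k j t = 0 := by
  by_contra h0
  have hs := haar_support_Ico h0
  refine ht ⟨le_trans (by positivity) hs.1, lt_of_lt_of_le hs.2 ?_⟩
  rw [div_le_one (by positivity)]
  exact_mod_cast hj

lemma integrable_id_mul_haar' (k j : ℕ) : Integrable (fun t => t * haar k j t) :=
  integrable_id_haar k j

end RothAux

namespace RothAux

variable {d : ℕ}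

/-- Product Haar function on `ℝ^d`. -/
def Hfn (r p : Fin d → ℕ) (x : Fin d → ℝ) : ℝ := ∏ i, haar (r i) (p i) (x i)

def cube (d : ℕ) : Set (Fin d → ℝ) := Set.univ.pi (fun _ : Fin d => Set.Ico (0:ℝ) 1)

lemma measurable_Hfn (r p : Fin d → ℕ) : Measurable (Hfn r p) :=
  Finset.measurable_prod _ (fun i _ => (measurable_haar (r i) (p i)).comp (measurable_pi_apply i))

lemma Hfn_mul_Hfn (r p r' p' : Fin d → ℕ) (x : Fin d → ℝ) :
    Hfn r p x * Hfn r' p' x = ∏ i, (haar (r i) (p i) (x i) * haar (r' i) (p' i) (x i)) := by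
  rw [Hfn, Hfn, Finset.prod_mul_distrib]

lemma integrable_Hfn_mul_Hfn (r p r' p' : Fin d → ℕ) :
    Integrable (fun x : Fin d → ℝ => Hfn r p x * Hfn r' p' x) := by
  have := Integrable.fintype_prod (𝕜 := ℝ) (E := ℝ) (ι := Fin d)
    (f := fun i t => haar (r i) (p i) t * haar (r' i) (p' i) t)
    (fun i => integrable_haar_mul _ _ _ _)
  simp only [Hfn_mul_Hfn]
  exact this

lemma integral_Hfn_mul_Hfn {r p r' p' : Fin d → ℕ} (hne : (r, p) ≠ (r', p')) :
    ∫ x : Fin d → ℝ, Hfn r p x * Hfn r' p' x = 0 := by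
  simp_rw [Hfn_mul_Hfn]
  rw [MeasureTheory.integral_fintype_prod_volume_eq_prod (𝕜 := ℝ)
    (f := fun i t => haar (r i) (p i) t * haar (r' i) (p' i) t)]
  have : ∃ i : Fin d, (r i, p i) ≠ (r' i, p' i) := by
    by_contra h
    push_neg at h
    exact hne (Prod.ext (funext fun i => (Prod.mk.injEq _ _ _ _ ▸ (h i)).1)
      (funext fun i => (Prod.mk.injEq _ _ _ _ ▸ (h i)).2))
  obtain ⟨i₀, hi₀⟩ := this
  exact Finset.prod_eq_zero (Finset.mem_univ i₀) (integral_haar_mul hi₀)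

lemma integral_Hfn_sq (r p : Fin d → ℕ) :
    ∫ x : Fin d → ℝ, Hfn r p x ^ 2 = ∏ i, (2:ℝ)⁻¹^(r i) := by
  have heq : ∀ x : Fin d → ℝ, Hfn r p x ^ 2 = ∏ i, haar (r i) (p i) (x i) ^ 2 := by
    intro x
    rw [Hfn, ← Finset.prod_pow]
  simp_rw [heq]
  rw [MeasureTheory.integral_fintype_prod_volume_eq_prod (𝕜 := ℝ)
    (f := fun i t => haar (r i) (p i) t ^ 2)]
  exact Finset.prod_congr rfl (fun i _ => integral_haar_sq _ _)

lemma indicator_pi_prod (S : Fin d → Set ℝ) (x : Fin d → ℝ) :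
    (Set.univ.pi S).indicator (fun _ => (1:ℝ)) x
      = ∏ i, (S i).indicator (fun _ => (1:ℝ)) (x i) := by
  classical
  by_cases h : x ∈ Set.univ.pi S
  · rw [Set.indicator_of_mem h]
    rw [Set.mem_univ_pi] at h
    exact (Finset.prod_eq_one (fun i _ => Set.indicator_of_mem (h i) _)).symm
  · rw [Set.indicator_of_notMem h]
    rw [Set.mem_univ_pi] at h
    push_neg at h
    obtain ⟨i₀, hi₀⟩ := h
    exact (Finset.prod_eq_zero (Finset.mem_univ i₀) (Set.indicator_of_notMem hi₀ _)).symm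

lemma Hfn_eq_zero_outside {r p : Fin d → ℕ} (hv : ∀ i, p i + 1 ≤ 2^(r i))
    {x : Fin d → ℝ} (hx : x ∉ cube d) : Hfn r p x = 0 := by
  rw [cube, Set.mem_univ_pi] at hx
  push_neg at hx
  obtain ⟨i₀, hi₀⟩ := hx
  exact Finset.prod_eq_zero (Finset.mem_univ i₀) (haar_eq_zero_outside (hv i₀) hi₀)

end RothAux

namespace RothAux

variable {d : ℕ}

lemma measurableSet_cube : MeasurableSet (cube d) :=
  MeasurableSet.univ_pi (fun _ => measurableSet_Ico)

lemma volume_cube : volume (cube d) = 1 := by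
  rw [cube, volume_pi_pi]
  simp [Real.volume_Ico]

lemma measurable_D (N : ℕ) (P : Finset (Fin d → ℝ)) : Measurable (discrepancyD d N P) := by
  apply Measurable.sub
  · exact Finset.measurable_sum _ (fun z _ =>
      measurable_const.indicator (MeasurableSet.univ_pi (fun i => measurableSet_Ioo)))
  · exact measurable_const.mul (Finset.measurable_prod _ (fun i _ => measurable_pi_apply i))

lemma abs_D_le {N : ℕ} {P : Finset (Fin d → ℝ)} (hcard : P.card = N) {x : Fin d → ℝ}
    (hx : x ∈ cube d) : |discrepancyD d N P x| ≤ 2 * N := by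
  rw [cube, Set.mem_univ_pi] at hx
  have h1 : (0:ℝ) ≤ ∑ z ∈ P, (Set.univ.pi (fun i => Set.Ioo (z i) 1)).indicator (fun _ => (1 : ℝ)) x :=
    Finset.sum_nonneg (fun z _ => Set.indicator_nonneg (fun _ _ => zero_le_one) x)
  have h2 : (∑ z ∈ P, (Set.univ.pi (fun i => Set.Ioo (z i) 1)).indicator (fun _ => (1 : ℝ)) x) ≤ N := by
    classical
    calc _ ≤ ∑ _z ∈ P, (1:ℝ) := Finset.sum_le_sum (fun z _ => by
          rw [Set.indicator_apply]
          split_ifs <;> norm_num)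
      _ = N := by rw [Finset.sum_const, hcard, nsmul_eq_mul, mul_one]
  have h3 : (0:ℝ) ≤ ∏ i, x i := Finset.prod_nonneg (fun i _ => (hx i).1)
  have h4 : (∏ i, x i) ≤ 1 := Finset.prod_le_one (fun i _ => (hx i).1) (fun i _ => le_of_lt (hx i).2)
  rw [discrepancyD, abs_sub_le_iff]
  constructor
  · have : (N:ℝ) * ∏ i, x i ≥ 0 := mul_nonneg (Nat.cast_nonneg N) h3
    nlinarith
  · have : (N:ℝ) * ∏ i, x i ≤ N := by nlinarith [Nat.cast_nonneg (α := ℝ) N]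
    nlinarith

lemma memL2_Hfn (r p : Fin d → ℕ) : MemLp (Hfn r p) 2 (volume : Measure (Fin d → ℝ)) := by
  refine (memLp_two_iff_integrable_sq (measurable_Hfn r p).aestronglyMeasurable).2 ?_
  have heq : (fun x : Fin d → ℝ => Hfn r p x ^ 2)
      = fun x => ∏ i, haar (r i) (p i) (x i) ^ 2 := by
    funext x
    rw [Hfn, ← Finset.prod_pow]
  rw [heq]
  exact Integrable.fintype_prod (f := fun i t => haar (r i) (p i) t ^ 2)
    (fun i => integrable_haar_sq _ _)

lemma memL2_f {N : ℕ} {P : Finset (Fin d → ℝ)} (hcard : P.card = N) :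
    MemLp ((cube d).indicator (discrepancyD d N P)) 2 (volume : Measure (Fin d → ℝ)) := by
  have hmeas : Measurable ((cube d).indicator (discrepancyD d N P)) :=
    (measurable_D N P).indicator measurableSet_cube
  refine (memLp_two_iff_integrable_sq hmeas.aestronglyMeasurable).2 ?_
  have hg : Integrable (fun x : Fin d → ℝ => (2*(N:ℝ))^2 * (cube d).indicator (fun _ => (1:ℝ)) x) := by
    refine Integrable.const_mul ?_ _
    rw [integrable_indicator_iff measurableSet_cube]
    exact integrableOn_const (by rw [volume_cube]; exact ENNReal.one_ne_top)
  refine hg.mono' (hmeas.pow_const 2).aestronglyMeasurable ?_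
  filter_upwards with x
  by_cases hx : x ∈ cube d
  · rw [Set.indicator_of_mem hx, Set.indicator_of_mem hx, Real.norm_eq_abs, abs_pow]
    calc |discrepancyD d N P x| ^ 2 ≤ (2*(N:ℝ))^2 := by
          have := abs_D_le hcard hx
          have h0 : (0:ℝ) ≤ |discrepancyD d N P x| := abs_nonneg _
          nlinarith
      _ = (2*(N:ℝ))^2 * 1 := by ring
  · rw [Set.indicator_of_notMem hx, Set.indicator_of_notMem hx]
    norm_num

lemma integral_f_sq (N : ℕ) (P : Finset (Fin d → ℝ)) :
    ∫ x : Fin d → ℝ, ((cube d).indicator (discrepancyD d N P) x)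
        * ((cube d).indicator (discrepancyD d N P) x)
      = ∫ x in cube d, (discrepancyD d N P x)^2 := by
  have heq : (fun x : Fin d → ℝ => ((cube d).indicator (discrepancyD d N P) x)
      * ((cube d).indicator (discrepancyD d N P) x))
      = (cube d).indicator (fun y => (discrepancyD d N P y)^2) := by
    funext x
    by_cases hx : x ∈ cube d
    · rw [Set.indicator_of_mem hx, Set.indicator_of_mem hx, sq]
    · rw [Set.indicator_of_notMem hx, Set.indicator_of_notMem hx, mul_zero]
  rw [heq, integral_indicator measurableSet_cube]

lemma integral_Hfn_mul_f {N : ℕ} {P : Finset (Fin d → ℝ)} {r p : Fin d → ℕ}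
    (hv : ∀ i, p i + 1 ≤ 2^(r i))
    (hempty : ∀ z ∈ P, ∃ i, z i < (p i : ℝ)/2^(r i) ∨ ((p i : ℝ)+1)/2^(r i) ≤ z i) :
    ∫ x : Fin d → ℝ, Hfn r p x * (cube d).indicator (discrepancyD d N P) x
      = -(N:ℝ) * ∏ i, ((2:ℝ)⁻¹^(r i + 1))^2 := by
  have hpt : (fun x : Fin d → ℝ => Hfn r p x * (cube d).indicator (discrepancyD d N P) x)
      = fun x => (∑ z ∈ P, Hfn r p x * (Set.univ.pi fun i => Set.Ioo (z i) 1).indicator (fun _ => (1:ℝ)) x)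
        - (N:ℝ) * (Hfn r p x * ∏ i, x i) := by
    funext x
    by_cases hx : x ∈ cube d
    · rw [Set.indicator_of_mem hx, discrepancyD, mul_sub, Finset.mul_sum]
      ring
    · rw [Set.indicator_of_notMem hx, Hfn_eq_zero_outside hv hx]
      simp
  have hzeq : ∀ z : Fin d → ℝ, (fun x : Fin d → ℝ =>
      Hfn r p x * (Set.univ.pi fun i => Set.Ioo (z i) 1).indicator (fun _ => (1:ℝ)) x)
      = fun x => ∏ i, ((Set.Ioo (z i) 1).indicator (fun _ => (1:ℝ)) (x i) * haar (r i) (p i) (x i)) := by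
    intro z
    funext x
    rw [indicator_pi_prod, Hfn, ← Finset.prod_mul_distrib]
    exact Finset.prod_congr rfl (fun i _ => mul_comm _ _)
  have hzint : ∀ z : Fin d → ℝ, Integrable (fun x : Fin d → ℝ =>
      Hfn r p x * (Set.univ.pi fun i => Set.Ioo (z i) 1).indicator (fun _ => (1:ℝ)) x) := by
    intro z
    rw [hzeq z]
    exact Integrable.fintype_prod (f := fun i t => (Set.Ioo (z i) 1).indicator (fun _ => (1:ℝ)) t * haar (r i) (p i) t)
      (fun i => integrable_Ioo_haar _ _ _)
  have hpeq : (fun x : Fin d → ℝ => Hfn r p x * ∏ i, x i)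
      = fun x => ∏ i, (x i * haar (r i) (p i) (x i)) := by
    funext x
    rw [Hfn, ← Finset.prod_mul_distrib]
    exact Finset.prod_congr rfl (fun i _ => mul_comm _ _)
  have hpint : Integrable (fun x : Fin d → ℝ => Hfn r p x * ∏ i, x i) := by
    rw [hpeq]
    exact Integrable.fintype_prod (f := fun i t => t * haar (r i) (p i) t)
      (fun i => integrable_id_haar _ _)
  rw [hpt, integral_sub (integrable_finset_sum _ (fun z _ => hzint z)) (hpint.const_mul _),
    integral_finset_sum _ (fun z _ => hzint z), integral_const_mul]
  have hzero : ∀ z ∈ P, ∫ x : Fin d → ℝ,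
      Hfn r p x * (Set.univ.pi fun i => Set.Ioo (z i) 1).indicator (fun _ => (1:ℝ)) x = 0 := by
    intro z hz
    rw [hzeq z, MeasureTheory.integral_fintype_prod_volume_eq_prod (𝕜 := ℝ)
      (f := fun i t => (Set.Ioo (z i) 1).indicator (fun _ => (1:ℝ)) t * haar (r i) (p i) t)]
    obtain ⟨i₀, hi₀⟩ := hempty z hz
    refine Finset.prod_eq_zero (Finset.mem_univ i₀) ?_
    rcases hi₀ with h | h
    · exact integral_Ioo_haar_left h (hv i₀)
    · exact integral_Ioo_haar_right h
  rw [Finset.sum_eq_zero hzero]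
  rw [hpeq, MeasureTheory.integral_fintype_prod_volume_eq_prod (𝕜 := ℝ)
    (f := fun i t => t * haar (r i) (p i) t)]
  rw [Finset.prod_congr rfl (fun i (_ : i ∈ Finset.univ) => integral_id_haar (r i) (p i))]
  ring

end RothAux

namespace RothAux

variable {d : ℕ}

lemma inner_toLp {f g : (Fin d → ℝ) → ℝ} (hf : MemLp f 2 (volume : Measure (Fin d → ℝ)))
    (hg : MemLp g 2 (volume : Measure (Fin d → ℝ))) :
    (inner ℝ (hf.toLp f) (hg.toLp g) : ℝ) = ∫ x, f x * g x := by
  rw [L2.inner_def]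
  refine integral_congr_ae ?_
  filter_upwards [hf.coeFn_toLp, hg.coeFn_toLp] with a h1 h2
  rw [h1, h2, RCLike.inner_apply, RCLike.conj_to_real, mul_comm]

/-- normalized Haar elements of L². -/
def eH (r p : Fin d → ℕ) : Lp ℝ 2 (volume : Measure (Fin d → ℝ)) :=
  Real.sqrt ((2:ℝ)^(∑ i, r i)) • (memL2_Hfn r p).toLp (Hfn r p)

lemma orthonormal_eH :
    Orthonormal ℝ (fun rp : (Fin d → ℕ) × (Fin d → ℕ) => eH rp.1 rp.2) := by
  classical
  rw [orthonormal_iff_ite]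
  rintro ⟨r, p⟩ ⟨r', p'⟩
  rw [eH, eH, real_inner_smul_left, real_inner_smul_right, inner_toLp]
  by_cases h : ((r, p) : (Fin d → ℕ) × (Fin d → ℕ)) = (r', p')
  · obtain ⟨h1, h2⟩ := Prod.mk.injEq _ _ _ _ ▸ h
    subst h1; subst h2
    rw [if_pos rfl]
    have : (fun x : Fin d → ℝ => Hfn r p x * Hfn r p x) = fun x => Hfn r p x ^ 2 := by
      funext x; ring
    rw [this, integral_Hfn_sq, Finset.prod_pow_eq_pow_sum]
    rw [← Real.sqrt_mul_self (by positivity : (0:ℝ) ≤ (2:ℝ)^(∑ i, r i))]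
    have h2pos : (0:ℝ) < (2:ℝ)^(∑ i, r i) := by positivity
    rw [Real.sqrt_mul_self (le_of_lt h2pos)]
    rw [inv_pow]
    field_simp
    exact Real.sq_sqrt (le_of_lt h2pos)
  · rw [if_neg h, integral_Hfn_mul_Hfn h, mul_zero, mul_zero]

lemma norm_sq_inner_eH_toLp {N : ℕ} {P : Finset (Fin d → ℝ)} (hcard : P.card = N)
    {r p : Fin d → ℕ} (hv : ∀ i, p i + 1 ≤ 2^(r i))
    (hempty : ∀ z ∈ P, ∃ i, z i < (p i : ℝ)/2^(r i) ∨ ((p i : ℝ)+1)/2^(r i) ≤ z i) :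
    ‖(inner ℝ (eH r p) ((memL2_f hcard).toLp ((cube d).indicator (discrepancyD d N P))) : ℝ)‖^2
      = (N:ℝ)^2 * ((2:ℝ)⁻¹)^(4*d) * ((2:ℝ)⁻¹)^(3*(∑ i, r i)) := by
  rw [eH, real_inner_smul_left, inner_toLp, integral_Hfn_mul_f hv hempty]
  have hprod : (∏ i, ((2:ℝ)⁻¹^(r i + 1))^2) = ((2:ℝ)⁻¹)^(2*(∑ i, r i) + 2*d) := by
    have : ∀ i : Fin d, ((2:ℝ)⁻¹^(r i + 1))^2 = ((2:ℝ)⁻¹)^(2*(r i) + 2) := by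
      intro i; rw [← pow_mul]; ring_nf
    rw [Finset.prod_congr rfl (fun i _ => this i), Finset.prod_pow_eq_pow_sum]
    congr 1
    rw [Finset.sum_add_distrib, ← Finset.mul_sum]
    simp [Finset.card_univ, mul_comm]
  rw [hprod]
  rw [Real.norm_eq_abs, sq_abs]
  have hs : Real.sqrt ((2:ℝ)^(∑ i, r i)) ^ 2 = (2:ℝ)^(∑ i, r i) :=
    Real.sq_sqrt (by positivity)
  have expand : (Real.sqrt ((2:ℝ)^(∑ i, r i)) * (-(N:ℝ) * ((2:ℝ)⁻¹)^(2*(∑ i, r i) + 2*d)))^2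
      = (2:ℝ)^(∑ i, r i) * (N:ℝ)^2 * (((2:ℝ)⁻¹)^(2*(∑ i, r i) + 2*d))^2 := by
    rw [mul_pow, hs, mul_pow, neg_pow]
    ring
  rw [expand]
  have h2 : (((2:ℝ)⁻¹)^(2*(∑ i, r i) + 2*d))^2 = ((2:ℝ)⁻¹)^(4*(∑ i, r i) + 4*d) := by
    rw [← pow_mul]; ring_nf
  rw [h2]
  have h3 : (2:ℝ)^(∑ i, r i) = (((2:ℝ)⁻¹)^(∑ i, r i))⁻¹ := by
    rw [← inv_pow, inv_inv]
  rw [h3]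
  have h4 : ((2:ℝ)⁻¹)^(4*(∑ i, r i) + 4*d)
      = ((2:ℝ)⁻¹)^(∑ i, r i) * (((2:ℝ)⁻¹)^(4*d) * ((2:ℝ)⁻¹)^(3*(∑ i, r i))) := by
    rw [← pow_add, ← pow_add]
    congr 1
    ring
  rw [h4]
  have hne : ((2:ℝ)⁻¹)^(∑ i, r i) ≠ 0 := by positivity
  field_simp

end RothAux

namespace RothAux

variable {d : ℕ}

def validB (r : Fin d → ℕ) : Finset (Fin d → ℕ) :=
  Fintype.piFinset fun i => Finset.range (2^(r i))

open scoped Classical in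
noncomputable def emptyB (P : Finset (Fin d → ℝ)) (r : Fin d → ℕ) : Finset (Fin d → ℕ) :=
  (validB r).filter
    (fun p => ∀ z ∈ P, ∃ i, z i < (p i : ℝ)/2^(r i) ∨ ((p i : ℝ)+1)/2^(r i) ≤ z i)

lemma card_validB (r : Fin d → ℕ) : (validB r).card = 2^(∑ i, r i) := by
  rw [validB, Fintype.card_piFinset]
  simp only [Finset.card_range]
  exact Finset.prod_pow_eq_pow_sum _ _ _

lemma emptyB_subset (P : Finset (Fin d → ℝ)) (r : Fin d → ℕ) : emptyB P r ⊆ validB r :=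
  Finset.filter_subset _ _

lemma mem_emptyB {P : Finset (Fin d → ℝ)} {r p : Fin d → ℕ} (hp : p ∈ emptyB P r) :
    (∀ i, p i + 1 ≤ 2^(r i)) ∧
      (∀ z ∈ P, ∃ i, z i < (p i : ℝ)/2^(r i) ∨ ((p i : ℝ)+1)/2^(r i) ≤ z i) := by
  classical
  rw [emptyB, Finset.mem_filter] at hp
  refine ⟨fun i => ?_, hp.2⟩
  have := hp.1
  rw [validB, Fintype.mem_piFinset] at this
  have := this i
  rw [Finset.mem_range] at this
  omega

lemma card_emptyB {N : ℕ} {P : Finset (Fin d → ℝ)} (hcard : P.card = N) (r : Fin d → ℕ) :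
    2^(∑ i, r i) ≤ (emptyB P r).card + N := by
  classical
  set boxOf : (Fin d → ℝ) → (Fin d → ℕ) := fun z i => ⌊z i * 2^(r i)⌋₊ with hboxOf
  have hsub : validB r \ emptyB P r ⊆ P.image boxOf := by
    intro p hp
    rw [Finset.mem_sdiff] at hp
    have hnot : ¬ (∀ z ∈ P, ∃ i, z i < (p i : ℝ)/2^(r i) ∨ ((p i : ℝ)+1)/2^(r i) ≤ z i) := by
      intro h
      exact hp.2 (by rw [emptyB, Finset.mem_filter]; exact ⟨hp.1, by simpa using h⟩)
    push_neg at hnot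
    obtain ⟨z, hzP, hz⟩ := hnot
    rw [Finset.mem_image]
    refine ⟨z, hzP, ?_⟩
    funext i
    have h2 : (0:ℝ) < 2^(r i) := by positivity
    have h1 : (p i : ℝ) ≤ z i * 2^(r i) := by
      rw [← div_le_iff₀ h2]
      exact (hz i).1
    have h3 : z i * 2^(r i) < (p i : ℝ) + 1 := by
      rw [← lt_div_iff₀ h2]
      exact (hz i).2
    have h0 : (0:ℝ) ≤ z i * 2^(r i) := le_trans (by positivity) h1
    show ⌊z i * 2^(r i)⌋₊ = p i
    rw [Nat.floor_eq_iff h0]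
    push_cast
    exact ⟨h1, h3⟩
  have h1 : (validB r \ emptyB P r).card ≤ N := by
    calc (validB r \ emptyB P r).card ≤ (P.image boxOf).card := Finset.card_le_card hsub
      _ ≤ P.card := Finset.card_image_le
      _ = N := hcard
  have h2 : (validB r \ emptyB P r).card + (emptyB P r).card = (validB r).card :=
    Finset.card_sdiff_add_card_eq_card (emptyB_subset P r)
  rw [card_validB] at h2
  omega

end RothAux

namespace RothAux

variable {d : ℕ}

def shapes (d m : ℕ) : Finset (Fin d → ℕ) := Finset.Nat.antidiagonalTuple d m

lemma sum_eq_of_mem_shapes {m : ℕ} {r : Fin d → ℕ} (hr : r ∈ shapes d m) :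
    ∑ i, r i = m := by
  rwa [shapes, Finset.Nat.mem_antidiagonalTuple] at hr

lemma card_shapes (hd : 1 ≤ d) (m : ℕ) :
    (shapes d m).card = (m + d - 1).choose (d - 1) := by
  classical
  rw [shapes, ← Finset.piAntidiag_univ_fin_eq_antidiagonalTuple,
    ← Finset.map_sym_eq_piAntidiag, Finset.card_map, Finset.sym_univ, Finset.card_univ,
    Sym.card_sym_eq_choose, Fintype.card_fin]
  rw [show d + m - 1 = m + d - 1 by omega]
  rw [← Nat.choose_symm (show m ≤ m + d - 1 by omega)]
  congr 1
  omega

lemma card_shapes_lb (hd : 1 ≤ d) {M m : ℕ} (hM : 1 ≤ M) (hm : M ≤ m) :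
    (M:ℝ)^(d-1) / (Nat.factorial (d-1)) ≤ ((shapes d m).card : ℝ) := by
  have h1 : ((M + (d-1) - 1 + 1 - (d-1) : ℕ)^(d-1) : ℝ) / (Nat.factorial (d-1))
      ≤ ((M + (d-1) - 1).choose (d-1) : ℝ) := Nat.pow_le_choose (d-1) (M + (d-1) - 1)
  have he : M + (d-1) - 1 + 1 - (d-1) = M := by omega
  rw [he] at h1
  refine le_trans h1 ?_
  rw [card_shapes hd m, Nat.cast_le]
  exact Nat.choose_le_choose _ (by omega)

end RothAux

namespace RothAux

variable {d : ℕ}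

noncomputable def Sidx (P : Finset (Fin d → ℝ)) (m : ℕ) :
    Finset ((Fin d → ℕ) × (Fin d → ℕ)) :=
  (shapes d m).biUnion (fun r => (emptyB P r).image (fun p => (r, p)))

lemma mem_Sidx {P : Finset (Fin d → ℝ)} {m : ℕ} {rp : (Fin d → ℕ) × (Fin d → ℕ)} :
    rp ∈ Sidx P m ↔ rp.1 ∈ shapes d m ∧ rp.2 ∈ emptyB P rp.1 := by
  classical
  obtain ⟨a, b⟩ := rp
  simp only [Sidx, Finset.mem_biUnion, Finset.mem_image, Prod.mk.injEq]
  constructor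
  · rintro ⟨r, hr, p, hp, h1, h2⟩
    subst h1; subst h2
    exact ⟨hr, hp⟩
  · rintro ⟨h1, h2⟩
    exact ⟨a, h1, b, h2, rfl, rfl⟩

lemma sum_Sidx (P : Finset (Fin d → ℝ)) (m : ℕ) (f : (Fin d → ℕ) × (Fin d → ℕ) → ℝ) :
    ∑ rp ∈ Sidx P m, f rp = ∑ r ∈ shapes d m, ∑ p ∈ emptyB P r, f (r, p) := by
  classical
  rw [Sidx, Finset.sum_biUnion]
  · refine Finset.sum_congr rfl (fun r _ => ?_)
    rw [Finset.sum_image]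
    intro p _ q _ h
    exact (Prod.mk.injEq _ _ _ _ ▸ h).2
  · intro r hr r' hr' hne
    simp only [Finset.disjoint_left, Finset.mem_image]
    rintro ⟨x1, x2⟩ ⟨p, hp, hpe⟩ ⟨q, hq, hqe⟩
    apply hne
    have h1 := (Prod.mk.injEq _ _ _ _ ▸ hpe).1
    have h2 := (Prod.mk.injEq _ _ _ _ ▸ hqe).1
    rw [h1, h2]

lemma level_bound (hd : 1 ≤ d) {N : ℕ} {P : Finset (Fin d → ℝ)} (hcard : P.card = N)
    {M m : ℕ} (hM : 1 ≤ M) (hm : M ≤ m) (hNm : N ≤ 2^m) :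
    ((M:ℝ)^(d-1) / (Nat.factorial (d-1)))
        * (((2:ℝ)^m - N) * ((N:ℝ)^2 * ((2:ℝ)⁻¹)^(4*d) * ((2:ℝ)⁻¹)^(3*m)))
      ≤ ∑ rp ∈ Sidx P m, ‖(inner ℝ (eH rp.1 rp.2)
          ((memL2_f hcard).toLp ((cube d).indicator (discrepancyD d N P))) : ℝ)‖^2 := by
  rw [sum_Sidx]
  set v : ℝ := (N:ℝ)^2 * ((2:ℝ)⁻¹)^(4*d) * ((2:ℝ)⁻¹)^(3*m) with hv
  have hv0 : 0 ≤ v := by positivity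
  have hvm0 : 0 ≤ ((2:ℝ)^m - N) * v := by
    apply mul_nonneg _ hv0
    have : (N:ℝ) ≤ 2^m := by exact_mod_cast hNm
    linarith
  have hinner : ∀ r ∈ shapes d m,
      ((2:ℝ)^m - N) * v ≤ ∑ p ∈ emptyB P r, ‖(inner ℝ (eH r p)
        ((memL2_f hcard).toLp ((cube d).indicator (discrepancyD d N P))) : ℝ)‖^2 := by
    intro r hr
    have hsum : ∀ p ∈ emptyB P r, ‖(inner ℝ (eH r p)
        ((memL2_f hcard).toLp ((cube d).indicator (discrepancyD d N P))) : ℝ)‖^2 = v := by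
      intro p hp
      rw [norm_sq_inner_eH_toLp hcard (mem_emptyB hp).1 (mem_emptyB hp).2,
        sum_eq_of_mem_shapes hr]
    rw [Finset.sum_congr rfl hsum, Finset.sum_const, nsmul_eq_mul]
    apply mul_le_mul_of_nonneg_right _ hv0
    have hc := card_emptyB hcard r
    rw [sum_eq_of_mem_shapes hr] at hc
    have : ((2:ℝ)^m) ≤ ((emptyB P r).card : ℝ) + N := by exact_mod_cast hc
    linarith
  calc ((M:ℝ)^(d-1) / (Nat.factorial (d-1))) * (((2:ℝ)^m - N) * v)
      ≤ ((shapes d m).card : ℝ) * (((2:ℝ)^m - N) * v) :=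
        mul_le_mul_of_nonneg_right (card_shapes_lb hd hM hm) hvm0
    _ ≤ _ := by
        have := Finset.card_nsmul_le_sum (shapes d m) _ _ hinner
        rwa [nsmul_eq_mul] at this

lemma bessel_bound {N : ℕ} {P : Finset (Fin d → ℝ)} (hcard : P.card = N)
    (s : Finset ((Fin d → ℕ) × (Fin d → ℕ))) :
    ∑ rp ∈ s, ‖(inner ℝ (eH rp.1 rp.2)
        ((memL2_f hcard).toLp ((cube d).indicator (discrepancyD d N P))) : ℝ)‖^2
      ≤ ∫ x in cube d, (discrepancyD d N P x)^2 := by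
  have hb := (orthonormal_eH (d := d)).sum_inner_products_le (s := s)
    ((memL2_f hcard).toLp ((cube d).indicator (discrepancyD d N P)))
  refine le_trans hb ?_
  rw [← real_inner_self_eq_norm_sq, inner_toLp, integral_f_sq]

end RothAux

namespace RothAux

variable {d : ℕ}

lemma level_eq (d M k N : ℕ) (Cf : ℝ) :
    Cf * (((2:ℝ)^(M+k) - N) * ((N:ℝ)^2 * ((2:ℝ)⁻¹)^(4*d) * ((2:ℝ)⁻¹)^(3*(M+k))))
    = (((2:ℝ)⁻¹)^(4*d) * Cf) * (((N:ℝ)*((2:ℝ)⁻¹)^M)^2 * ((4:ℝ)⁻¹)^k)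
      - (((2:ℝ)⁻¹)^(4*d) * Cf) * (((N:ℝ)*((2:ℝ)⁻¹)^M)^3 * ((8:ℝ)⁻¹)^k) := by
  have h4 : ((4:ℝ)⁻¹)^k = (((2:ℝ)⁻¹)^2)^k := by norm_num
  have h8 : ((8:ℝ)⁻¹)^k = (((2:ℝ)⁻¹)^3)^k := by norm_num
  rw [h4, h8, ← pow_mul, ← pow_mul]
  rw [show 3*(M+k) = 3*M + 3*k by ring, pow_add]
  rw [show 2*k = k*2 by ring, show 3*k = k*3 by ring]
  have hcancel : (2:ℝ)^(M+k) * (((2:ℝ)⁻¹)^(3*M) * ((2:ℝ)⁻¹)^(k*3))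
      = ((2:ℝ)⁻¹)^(2*M) * ((2:ℝ)⁻¹)^(k*2) := by
    have h1 : (2:ℝ)^(M+k) * ((2:ℝ)⁻¹)^(M+k) = 1 := by
      rw [← mul_pow]; norm_num
    have h2 : ((2:ℝ)⁻¹)^(3*M) * ((2:ℝ)⁻¹)^(k*3)
        = ((2:ℝ)⁻¹)^(M+k) * (((2:ℝ)⁻¹)^(2*M) * ((2:ℝ)⁻¹)^(k*2)) := by
      rw [← pow_add, ← pow_add, ← pow_add]
      congr 1
      ring
    rw [h2, ← mul_assoc, h1, one_mul]
  have haM2 : (((N:ℝ))*((2:ℝ)⁻¹)^M)^2 = (N:ℝ)^2 * ((2:ℝ)⁻¹)^(2*M) := by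
    rw [mul_pow, ← pow_mul]
    ring_nf
  have haM3 : (((N:ℝ))*((2:ℝ)⁻¹)^M)^3 = (N:ℝ)^3 * ((2:ℝ)⁻¹)^(3*M) := by
    rw [mul_pow, ← pow_mul]
    ring_nf
  rw [haM2, haM3]
  linear_combination (Cf * (N:ℝ)^2 * ((2:ℝ)⁻¹)^(4*d)) * hcancel

lemma partial_sums_le (hd : 1 ≤ d) {N : ℕ} {P : Finset (Fin d → ℝ)} (hcard : P.card = N)
    {M : ℕ} (hM : 1 ≤ M) (hNM : N ≤ 2^M) (K : ℕ) :
    ∑ k ∈ Finset.range K,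
        ((((2:ℝ)⁻¹)^(4*d) * ((M:ℝ)^(d-1) / (Nat.factorial (d-1))))
            * (((N:ℝ)*((2:ℝ)⁻¹)^M)^2 * ((4:ℝ)⁻¹)^k)
          - (((2:ℝ)⁻¹)^(4*d) * ((M:ℝ)^(d-1) / (Nat.factorial (d-1))))
            * (((N:ℝ)*((2:ℝ)⁻¹)^M)^3 * ((8:ℝ)⁻¹)^k))
      ≤ ∫ x in cube d, (discrepancyD d N P x)^2 := by
  classical
  have hdis : (↑(Finset.range K) : Set ℕ).PairwiseDisjoint (fun k => Sidx P (M+k)) := by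
    intro k _ k' _ hne
    simp only [Finset.disjoint_left]
    intro rp h1 h2
    apply hne
    have e1 := sum_eq_of_mem_shapes (mem_Sidx.1 h1).1
    have e2 := sum_eq_of_mem_shapes (mem_Sidx.1 h2).1
    omega
  calc ∑ k ∈ Finset.range K, _
      ≤ ∑ k ∈ Finset.range K, ∑ rp ∈ Sidx P (M+k), ‖(inner ℝ (eH rp.1 rp.2)
          ((memL2_f hcard).toLp ((cube d).indicator (discrepancyD d N P))) : ℝ)‖^2 := by
        refine Finset.sum_le_sum (fun k _ => ?_)
        rw [← level_eq d M k N (((M:ℝ))^(d-1) / (Nat.factorial (d-1)))]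
        exact level_bound hd hcard hM (Nat.le_add_right M k)
          (le_trans hNM (Nat.pow_le_pow_right (by norm_num) (Nat.le_add_right M k)))
    _ = ∑ rp ∈ (Finset.range K).biUnion (fun k => Sidx P (M+k)), ‖(inner ℝ (eH rp.1 rp.2)
          ((memL2_f hcard).toLp ((cube d).indicator (discrepancyD d N P))) : ℝ)‖^2 :=
        (Finset.sum_biUnion hdis).symm
    _ ≤ _ := bessel_bound hcard _

end RothAux

open RothAux in
theorem L2_discrepancy_sq_lower_bound_d (d N : ℕ) (hN : 2 ≤ N) (P : Finset (Fin d → ℝ))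
    (hP : ↑P ⊆ Set.univ.pi (fun _ : Fin d => Set.Ico (0 : ℝ) 1)) (hcard : P.card = N) :
    (2 : ℝ) ^ (-(4 : ℤ) * d) * ((N : ℝ) * 2 ^ (-(Nat.clog 2 N : ℤ))) ^ 2 * (4 / 3) *
        (Nat.clog 2 N : ℝ) ^ (d - 1) / (Nat.factorial (d - 1)) -
      (2 : ℝ) ^ (-(4 : ℤ) * d) * ((N : ℝ) * 2 ^ (-(Nat.clog 2 N : ℤ))) ^ 3 * (8 / 7) *
        (Nat.clog 2 N : ℝ) ^ (d - 1) / (Nat.factorial (d - 1))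
      ≤ ∫ x in Set.univ.pi (fun _ : Fin d => Set.Ico (0 : ℝ) 1), (discrepancyD d N P x) ^ 2 := by
  have hd : 1 ≤ d := by
    by_contra h
    push_neg at h
    interval_cases d
    have : P.card ≤ 1 := Finset.card_le_one.2 (fun a _ b _ => funext fun i => i.elim0)
    omega
  set M := Nat.clog 2 N with hMdef
  have hM : 1 ≤ M := Nat.clog_pos one_lt_two hN
  have hNM : N ≤ 2^M := Nat.le_pow_clog one_lt_two N
  set A : ℝ := ((2:ℝ)⁻¹)^(4*d) * ((M:ℝ)^(d-1) / (Nat.factorial (d-1))) with hA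
  set a : ℝ := (N:ℝ) * ((2:ℝ)⁻¹)^M with ha
  have hzd : (2:ℝ) ^ (-(4:ℤ) * (d:ℤ)) = ((2:ℝ)⁻¹)^(4*d) := by
    rw [show (-(4:ℤ) * (d:ℤ)) = -((4*d : ℕ):ℤ) by push_cast; ring, zpow_neg, zpow_natCast,
      ← inv_pow]
  have hzM : (2:ℝ) ^ (-(M:ℤ)) = ((2:ℝ)⁻¹)^M := by
    rw [zpow_neg, zpow_natCast, ← inv_pow]
  have hs4 : Summable (fun k : ℕ => A * (a^2 * ((4:ℝ)⁻¹)^k)) :=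
    Summable.mul_left _ (Summable.mul_left _
      (summable_geometric_of_lt_one (by norm_num) (by norm_num)))
  have hs8 : Summable (fun k : ℕ => A * (a^3 * ((8:ℝ)⁻¹)^k)) :=
    Summable.mul_left _ (Summable.mul_left _
      (summable_geometric_of_lt_one (by norm_num) (by norm_num)))
  have h4v : ∑' k : ℕ, A * (a^2 * ((4:ℝ)⁻¹)^k) = A * a^2 * (4/3) := by
    rw [tsum_mul_left, tsum_mul_left, tsum_geometric_of_lt_one (by norm_num) (by norm_num)]
    rw [show ((1:ℝ) - 4⁻¹)⁻¹ = 4/3 by norm_num]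
    ring
  have h8v : ∑' k : ℕ, A * (a^3 * ((8:ℝ)⁻¹)^k) = A * a^3 * (8/7) := by
    rw [tsum_mul_left, tsum_mul_left, tsum_geometric_of_lt_one (by norm_num) (by norm_num)]
    rw [show ((1:ℝ) - 8⁻¹)⁻¹ = 8/7 by norm_num]
    ring
  have key := Summable.tsum_le_of_sum_range_le (hs4.sub hs8)
    (partial_sums_le hd hcard hM hNM)
  rw [Summable.tsum_sub hs4 hs8, h4v, h8v] at key
  have hgoal : (2 : ℝ) ^ (-(4 : ℤ) * d) * ((N : ℝ) * 2 ^ (-(M : ℤ))) ^ 2 * (4 / 3) *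
        (M : ℝ) ^ (d - 1) / (Nat.factorial (d - 1)) -
      (2 : ℝ) ^ (-(4 : ℤ) * d) * ((N : ℝ) * 2 ^ (-(M : ℤ))) ^ 3 * (8 / 7) *
        (M : ℝ) ^ (d - 1) / (Nat.factorial (d - 1))
      = A * a^2 * (4/3) - A * a^3 * (8/7) := by
    rw [hzd, hzM, hA, ha]
    ring
  rw [hgoal]
  exact key
end
end
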